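/- arXiv:1405.3051 — 6 statements merged into one kernel-verified Lean document; each statement's English description precedes it below -/
import Mathlib

section
/- Let (W,S) be a Coxeter system with length function ℓ. For all g, h ∈ W, ℓ(gh) = ℓ(g) + ℓ(h) − 2·N, where N is the number of reflections t ∈ W such that t is a right inversion of g and a left inversion of h. -/
namespace CoxeterHR

open CoxeterSystem Finset
open scoped Classical

variable {B W : Type*} [Group W] {M : CoxeterMatrix B} (cs : CoxeterSystem M W)

local prefix:100 "s" => cs.simple
local prefix:100 "ℓ" => cs.length

private lemma zmod2_cases (a : ZMod 2) : a = 0 ∨ a = 1 := by revert a; decide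

private lemma zmod2_add_self (a : ZMod 2) : a + a = 0 := by revert a; decide

private lemma conj_eq_iff {G : Type*} [Group G] (a b c t : G) :
    a * t * b = c ↔ t = a⁻¹ * c * b⁻¹ := by
  constructor
  · intro h; rw [← h]; group
  · intro h; rw [h]; group

/-- Bourbaki's involution attached to a simple reflection, acting on `W × ZMod 2`. -/
noncomputable def sigma (i : B) : Equiv.Perm (W × ZMod 2) where
  toFun x := (s i * x.1 * s i, x.2 + if x.1 = s i then 1 else 0)
  invFun x := (s i * x.1 * s i, x.2 + if x.1 = s i then 1 else 0)
  left_inv := by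
    rintro ⟨t, ε⟩
    have h1 : s i * (s i * t * s i) * s i = t := by
      simp [mul_assoc, cs.simple_mul_simple_cancel_left, cs.simple_mul_simple_cancel_right]
    have h2 : (s i * t * s i = s i) ↔ (t = s i) := by
      rw [conj_eq_iff, cs.inv_simple, cs.simple_mul_simple_cancel_right]
    simp only [h1, h2]
    refine Prod.ext rfl ?_
    rcases eq_or_ne t (s i) with h | h <;>
      simp [h, add_assoc, zmod2_add_self]
  right_inv := by
    rintro ⟨t, ε⟩
    have h1 : s i * (s i * t * s i) * s i = t := by
      simp [mul_assoc, cs.simple_mul_simple_cancel_left, cs.simple_mul_simple_cancel_right]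
    have h2 : (s i * t * s i = s i) ↔ (t = s i) := by
      rw [conj_eq_iff, cs.inv_simple, cs.simple_mul_simple_cancel_right]
    simp only [h1, h2]
    refine Prod.ext rfl ?_
    rcases eq_or_ne t (s i) with h | h <;>
      simp [h, add_assoc, zmod2_add_self]

lemma sigma_apply (i : B) (t : W) (ε : ZMod 2) :
    sigma cs i (t, ε) = (s i * t * s i, ε + if t = s i then 1 else 0) := rfl

lemma simple_mul_prod (i j : B) :
    s j * (s i * s j) = (s i * s j)⁻¹ * s j := by
  rw [mul_inv_rev, cs.inv_simple, cs.inv_simple, mul_assoc]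

lemma sigma_mul_apply (i j : B) (t : W) (ε : ZMod 2) :
    (sigma cs i * sigma cs j) (t, ε) =
      ((s i * s j) * t * (s i * s j)⁻¹,
        ε + ((if t = s j then 1 else 0) + if t = (s i * s j)⁻¹ * s j then 1 else 0)) := by
  rw [Equiv.Perm.mul_apply, sigma_apply, sigma_apply]
  have h2 : (s j * t * s j = s i) ↔ (t = (s i * s j)⁻¹ * s j) := by
    rw [conj_eq_iff, cs.inv_simple, mul_inv_rev, cs.inv_simple, cs.inv_simple, mul_assoc]
  rw [h2]
  refine Prod.ext ?_ ?_
  · show s i * (s j * t * s j) * s i = s i * s j * t * (s i * s j)⁻¹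
    rw [mul_inv_rev, cs.inv_simple, cs.inv_simple]
    group
  · show ε + (if t = s j then 1 else 0) + (if t = (s i * s j)⁻¹ * s j then 1 else 0) = _
    dsimp only
    rw [add_assoc]

lemma sigma_mul_pow_apply (i j : B) (k : ℕ) (t : W) (ε : ZMod 2) :
    ((sigma cs i * sigma cs j) ^ k) (t, ε) =
      ((s i * s j) ^ k * t * ((s i * s j)⁻¹) ^ k,
        ε + ∑ r ∈ Finset.range (2 * k),
          if t = ((s i * s j)⁻¹) ^ r * s j then 1 else 0) := by
  induction k generalizing t ε with
  | zero => simp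
  | succ k ih =>
    set p := s i * s j with hp
    have hsp : s j * p = p⁻¹ * s j := simple_mul_prod cs i j
    have key : ∀ r : ℕ, (p * t * p⁻¹ = (p⁻¹) ^ r * s j) ↔ (t = (p⁻¹) ^ (r + 2) * s j) := by
      intro r
      rw [conj_eq_iff]
      have : p⁻¹ * ((p⁻¹) ^ r * s j) * (p⁻¹)⁻¹ = (p⁻¹) ^ (r + 2) * s j := by
        calc p⁻¹ * ((p⁻¹) ^ r * s j) * (p⁻¹)⁻¹
            = (p⁻¹) ^ (r + 1) * (s j * p) := by group
          _ = (p⁻¹) ^ (r + 1) * (p⁻¹ * s j) := by rw [hsp]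
          _ = (p⁻¹) ^ (r + 2) * s j := by group
      rw [this]
    rw [pow_succ, Equiv.Perm.mul_apply, sigma_mul_apply, ih]
    rw [← hp]
    refine Prod.ext ?_ ?_
    · dsimp only
      group
    · dsimp only
      have hsum : ∑ r ∈ Finset.range (2 * k), (if p * t * p⁻¹
          = (p⁻¹) ^ r * s j then (1 : ZMod 2) else 0) =
          ∑ r ∈ Finset.range (2 * k), if t = (p⁻¹) ^ (r + 2) * s j then 1 else 0 := by
        refine Finset.sum_congr rfl fun r _ => ?_
        rw [key r]
      rw [hsum]
      have h2k : 2 * (k + 1) = (2 * k + 1) + 1 := by ring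
      rw [h2k, Finset.sum_range_succ', Finset.sum_range_succ']
      simp only [pow_zero, one_mul, zero_add, pow_one]
      have hre : ∀ r : ℕ, r + 1 + 1 = r + 2 := fun r => by omega
      simp only [hre]
      abel

lemma isLiftable : M.IsLiftable (fun i => (sigma cs i : Equiv.Perm (W × ZMod 2))) := by
  intro i j
  have hp : (s i * s j) ^ M i j = 1 := cs.simple_mul_simple_pow i j
  have hpinv : ((s i * s j)⁻¹) ^ M i j = 1 := by
    rw [inv_pow, hp, inv_one]
  refine Equiv.ext fun x => ?_
  rcases x with ⟨t, ε⟩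
  dsimp only
  rw [sigma_mul_pow_apply, hp, hpinv]
  have hsum : ∑ r ∈ Finset.range (2 * M i j),
      (if t = ((s i * s j)⁻¹) ^ r * s j then (1 : ZMod 2) else 0) = 0 := by
    rw [two_mul, Finset.sum_range_add]
    have hshift : ∀ r : ℕ, ((s i * s j)⁻¹) ^ (M i j + r) = ((s i * s j)⁻¹) ^ r := by
      intro r
      rw [pow_add, hpinv, one_mul]
    simp only [hshift]
    rw [← Finset.sum_add_distrib]
    exact Finset.sum_eq_zero fun r _ => zmod2_add_self _
  rw [hsum]
  simp

/-- The permutation representation of the Coxeter group on `W × ZMod 2`. -/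
noncomputable def mu : W →* Equiv.Perm (W × ZMod 2) :=
  cs.lift ⟨fun i => sigma cs i, isLiftable cs⟩

lemma mu_simple (i : B) : mu cs (s i) = sigma cs i :=
  cs.lift_apply_simple (isLiftable cs) i

/-- The reflection cocycle. -/
noncomputable def eta (w t : W) : ZMod 2 := ((mu cs w) (t, 0)).2

lemma eta_one' (t : W) : eta cs 1 t = 0 := by
  unfold eta
  rw [map_one]
  rfl

lemma mu_apply (w t : W) (ε : ZMod 2) :
    (mu cs w) (t, ε) = (w * t * w⁻¹, ε + eta cs w t) := by
  induction w using cs.simple_induction_left generalizing t ε with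
  | one => rw [map_one, eta_one']; simp
  | mul_simple_left w i ih =>
    have h0 : ∀ ε' : ZMod 2, (mu cs (s i * w)) (t, ε') = (sigma cs i) ((mu cs w) (t, ε')) := by
      intro ε'
      rw [map_mul, mu_simple, Equiv.Perm.mul_apply]
    have heta : eta cs (s i * w) t =
        eta cs w t + if w * t * w⁻¹ = s i then 1 else 0 := by
      show ((mu cs (s i * w)) (t, 0)).2 = _
      rw [h0 0, ih t 0, sigma_apply]
      dsimp only
      rw [zero_add]
    rw [h0 ε, ih t ε, sigma_apply, heta]
    refine Prod.ext ?_ ?_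
    · show s i * (w * t * w⁻¹) * s i = s i * w * t * (s i * w)⁻¹
      rw [mul_inv_rev, cs.inv_simple]
      group
    · show ε + eta cs w t + (if w * t * w⁻¹ = s i then 1 else 0) =
        ε + (eta cs w t + if w * t * w⁻¹ = s i then 1 else 0)
      rw [add_assoc]

lemma eta_cocycle (x y t : W) :
    eta cs (x * y) t = eta cs x (y * t * y⁻¹) + eta cs y t := by
  have h : (mu cs (x * y)) (t, 0) = (mu cs x) ((mu cs y) (t, 0)) := by
    rw [map_mul, Equiv.Perm.mul_apply]
  rw [mu_apply, mu_apply, mu_apply] at h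
  have h2 := congrArg Prod.snd h
  simp only at h2
  rw [zero_add, zero_add] at h2
  rw [h2]
  abel

lemma eta_simple (i : B) (t : W) :
    eta cs (s i) t = if t = s i then 1 else 0 := by
  unfold eta
  rw [mu_simple, sigma_apply]
  simp

lemma eta_one (t : W) : eta cs 1 t = 0 := by
  unfold eta
  simp

lemma eta_inv (x t : W) : eta cs x⁻¹ t = eta cs x (x⁻¹ * t * x) := by
  have h := eta_cocycle cs x x⁻¹ t
  rw [mul_inv_cancel, eta_one, inv_inv] at h
  rcases zmod2_cases (eta cs x (x⁻¹ * t * x)) with h0 | h0 <;>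
    rcases zmod2_cases (eta cs x⁻¹ t) with h1 | h1 <;>
    rw [h0, h1] <;> rw [h0, h1] at h <;> revert h <;> decide

lemma eta_mul_simple (w : W) (i : B) (t : W) :
    eta cs (w * s i) t = eta cs w (s i * t * s i) + if t = s i then 1 else 0 := by
  rw [eta_cocycle, eta_simple, cs.inv_simple]

/-- If `η w t = 1` then right multiplication by `t` decreases length. -/
lemma length_mul_lt_of_eta_eq_one :
    ∀ n : ℕ, ∀ w t : W, ℓ w = n → eta cs w t = 1 → ℓ (w * t) < ℓ w := by
  intro n
  induction n using Nat.strong_induction_on with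
  | _ n ih =>
    intro w t hn h
    rcases eq_or_ne w 1 with rfl | hw
    · rw [eta_one] at h; exact absurd h (by decide)
    obtain ⟨i, hi⟩ := cs.exists_rightDescent_of_ne_one hw
    have hi' : ℓ (w * s i) < ℓ w := hi
    have hlen : ℓ (w * s i) + 1 = ℓ w := by
      rcases cs.length_mul_simple w i with h' | h' <;> omega
    have hw' : w = (w * s i) * s i := by
      rw [cs.simple_mul_simple_cancel_right]
    rcases eq_or_ne t (s i) with rfl | ht
    · exact hi'
    · have hsplit : eta cs w t = eta cs (w * s i) (s i * t * s i) := by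
        conv_lhs => rw [hw']
        rw [eta_mul_simple, if_neg ht, add_zero]
      rw [hsplit] at h
      have hlt : ℓ (w * s i) < n := by omega
      have ihres := ih (ℓ (w * s i)) hlt (w * s i) (s i * t * s i) rfl h
      have heq : (w * s i) * (s i * t * s i) = w * t * s i := by
        rw [show (w * s i) * (s i * t * s i) = w * (s i * (s i * t)) * s i by group]
        rw [cs.simple_mul_simple_cancel_left]
      rw [heq] at ihres
      have hle : ℓ (w * t) ≤ ℓ (w * t * s i) + 1 := by
        have h1 := cs.length_mul_le (w * t * s i) (s i)
        rw [cs.simple_mul_simple_cancel_right, cs.length_simple] at h1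
        omega
      omega

/-- `η t t = 1` for every reflection `t`. -/
lemma eta_self_eq_one {t : W} (ht : cs.IsReflection t) : eta cs t t = 1 := by
  obtain ⟨u, i, rfl⟩ := ht
  have key1 : eta cs (u * s i * u⁻¹) (u * s i * u⁻¹) =
      eta cs u (s i) + eta cs (s i * u⁻¹) (u * s i * u⁻¹) := by
    have hconj : (s i * u⁻¹) * (u * s i * u⁻¹) * (s i * u⁻¹)⁻¹ = s i := by
      rw [mul_inv_rev, inv_inv, cs.inv_simple]
      simp [mul_assoc, cs.simple_mul_simple_cancel_left]
    have := eta_cocycle cs u (s i * u⁻¹) (u * s i * u⁻¹)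
    rw [hconj] at this
    rw [show u * (s i * u⁻¹) = u * s i * u⁻¹ by rw [mul_assoc]] at this
    exact this
  have key2 : eta cs (s i * u⁻¹) (u * s i * u⁻¹) =
      1 + eta cs u (s i) := by
    have hconj2 : u⁻¹ * (u * s i * u⁻¹) * (u⁻¹)⁻¹ = s i := by
      simp [mul_assoc]
    have h := eta_cocycle cs (s i) u⁻¹ (u * s i * u⁻¹)
    rw [hconj2, eta_simple, if_pos rfl] at h
    rw [h, eta_inv]
    rw [show u⁻¹ * (u * s i * u⁻¹) * u = s i by simp [mul_assoc]]
  rw [key1, key2]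
  rcases zmod2_cases (eta cs u (s i)) with h0 | h0 <;> rw [h0] <;> decide

lemma isRightInversion_iff_eta {w t : W} (ht : cs.IsReflection t) :
    cs.IsRightInversion w t ↔ eta cs w t = 1 := by
  constructor
  · intro h
    have hlt := h.2
    by_contra hne
    have h0 : eta cs w t = 0 := (zmod2_cases _).resolve_right hne
    have h1 : eta cs (w * t) t = 1 := by
      rw [eta_cocycle, show t * t * t⁻¹ = t by group, h0, eta_self_eq_one cs ht]
      decide
    have hlt2 := length_mul_lt_of_eta_eq_one cs (ℓ (w * t)) (w * t) t rfl h1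
    rw [mul_assoc, ht.mul_self, mul_one] at hlt2
    omega
  · intro h1
    exact ⟨ht, length_mul_lt_of_eta_eq_one cs (ℓ w) w t rfl h1⟩

lemma isLeftInversion_iff_eta {w t : W} (ht : cs.IsReflection t) :
    cs.IsLeftInversion w t ↔ eta cs w⁻¹ t = 1 := by
  rw [← cs.isRightInversion_inv_iff]
  exact isRightInversion_iff_eta cs ht

lemma main : ∀ n : ℕ, ∀ g h : W, ℓ h = n →
    ({t : W | cs.IsRightInversion g t ∧ cs.IsLeftInversion h t}.Finite ∧
      ℓ g + ℓ h = ℓ (g * h) +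
        2 * {t : W | cs.IsRightInversion g t ∧ cs.IsLeftInversion h t}.ncard) := by
  intro n
  induction n with
  | zero =>
    intro g h hh
    have h1 : h = 1 := cs.length_eq_zero_iff.mp hh
    subst h1
    have hempty : {t : W | cs.IsRightInversion g t ∧ cs.IsLeftInversion 1 t} = ∅ := by
      ext t
      simp only [Set.mem_setOf_eq, Set.mem_empty_iff_false, iff_false, not_and]
      intro _ hli
      have := hli.2
      rw [mul_one, cs.length_one] at this
      omega
    rw [hempty]
    simp [hh]
  | succ n ih =>
    intro g h hh
    have hne : h ≠ 1 := by
      intro h1; rw [h1, cs.length_one] at hh; omega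
    obtain ⟨i, hi⟩ := cs.exists_leftDescent_of_ne_one hne
    have hi' : ℓ (s i * h) < ℓ h := hi
    have hh' : ℓ (s i * h) = n := by
      rcases cs.length_simple_mul h i with h' | h' <;> omega
    have hrec : s i * (s i * h) = h := cs.simple_mul_simple_cancel_left i
    obtain ⟨Nfin', Neq'⟩ := ih (g * s i) (s i * h) hh'
    set N := {t : W | cs.IsRightInversion g t ∧ cs.IsLeftInversion h t} with hN
    set N' := {t : W | cs.IsRightInversion (g * s i) t ∧ cs.IsLeftInversion (s i * h) t}
      with hN'
    set c : W → W := fun t => s i * t * s i with hc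
    have hcc : ∀ t, c (c t) = t := by
      intro t
      simp only [hc]
      simp [mul_assoc, cs.simple_mul_simple_cancel_left, cs.simple_mul_simple_cancel_right]
    have hcinj : Function.Injective c := by
      intro a b hab
      have := congrArg c hab
      rwa [hcc, hcc] at this
    have hcs : c (s i) = s i := by
      simp only [hc]
      rw [cs.simple_mul_simple_cancel_right]
    have hceq : ∀ t, c t = s i ↔ t = s i := by
      intro t
      constructor
      · intro h'; exact hcinj (h'.trans hcs.symm)
      · rintro rfl; exact hcs
    have hreflc : ∀ t, cs.IsReflection (c t) ↔ cs.IsReflection t := by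
      intro t
      rw [show c t = s i * t * (s i)⁻¹ by rw [cs.inv_simple]]
      exact cs.isReflection_conj_iff _ _
    have etaGS : ∀ t, eta cs (g * s i) (c t) = eta cs g t + if t = s i then 1 else 0 := by
      intro t
      rw [eta_mul_simple]
      congr 1
      · congr 1
        simp only [hc]
        simp [mul_assoc, cs.simple_mul_simple_cancel_left, cs.simple_mul_simple_cancel_right]
      · simp only [hceq t]
    have h'inv : (s i * h)⁻¹ = h⁻¹ * s i := by
      rw [mul_inv_rev, cs.inv_simple]
    have etaH : ∀ t, eta cs (s i * h)⁻¹ (c t) = eta cs h⁻¹ t + if t = s i then 1 else 0 := by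
      intro t
      rw [h'inv, eta_mul_simple]
      congr 1
      · congr 1
        simp only [hc]
        simp [mul_assoc, cs.simple_mul_simple_cancel_left, cs.simple_mul_simple_cancel_right]
      · simp only [hceq t]
    have etahs : eta cs h⁻¹ (s i) = 1 := by
      have hli : cs.IsLeftInversion h (s i) := ⟨cs.isReflection_simple i, hi'⟩
      exact (isLeftInversion_iff_eta cs (cs.isReflection_simple i)).mp hli
    have memN : ∀ t, t ∈ N ↔
        cs.IsReflection t ∧ eta cs g t = 1 ∧ eta cs h⁻¹ t = 1 := by
      intro t
      constructor
      · rintro ⟨h1, h2⟩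
        exact ⟨h1.1, (isRightInversion_iff_eta cs h1.1).mp h1,
          (isLeftInversion_iff_eta cs h1.1).mp h2⟩
      · rintro ⟨hr, e1, e2⟩
        exact ⟨(isRightInversion_iff_eta cs hr).mpr e1,
          (isLeftInversion_iff_eta cs hr).mpr e2⟩
    have memN' : ∀ t, t ∈ N' ↔
        cs.IsReflection t ∧ eta cs (g * s i) t = 1 ∧ eta cs (s i * h)⁻¹ t = 1 := by
      intro t
      constructor
      · rintro ⟨h1, h2⟩
        exact ⟨h1.1, (isRightInversion_iff_eta cs h1.1).mp h1,
          (isLeftInversion_iff_eta cs h1.1).mp h2⟩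
      · rintro ⟨hr, e1, e2⟩
        exact ⟨(isRightInversion_iff_eta cs hr).mpr e1,
          (isLeftInversion_iff_eta cs hr).mpr e2⟩
    have claim1 : ∀ t, t ≠ s i → (t ∈ N ↔ c t ∈ N') := by
      intro t ht
      rw [memN, memN', hreflc, etaGS, etaH, if_neg ht, add_zero, add_zero]
    have claim2 : s i ∉ N' := by
      rw [memN']
      rintro ⟨-, -, hcontra⟩
      have := etaH (s i)
      rw [hcs, if_pos rfl, etahs, hcontra] at this
      revert this
      decide
    have himg : ∀ u : W, u ∈ c '' N' ↔ c u ∈ N' := by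
      intro u
      constructor
      · rintro ⟨v, hv, rfl⟩; rwa [hcc]
      · intro h'; exact ⟨c u, h', hcc u⟩
    have hprod : (g * s i) * (s i * h) = g * h := by
      rw [mul_assoc, cs.simple_mul_simple_cancel_left]
    rw [hprod] at Neq'
    rcases zmod2_cases (eta cs g (s i)) with hgs | hgs
    · -- Case A : `s i` is not a right inversion of `g`.
      have hsN : s i ∉ N := by
        rw [memN]
        rintro ⟨-, hcontra, -⟩
        rw [hgs] at hcontra
        revert hcontra
        decide
      have hNeq : N = c '' N' := by
        ext u
        rw [himg]
        rcases eq_or_ne u (s i) with rfl | hune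
        · rw [hcs]
          exact iff_of_false hsN claim2
        · exact claim1 u hune
      have hgl : ℓ (g * s i) = ℓ g + 1 := by
        rcases cs.length_mul_simple g i with h' | h'
        · exact h'
        · exfalso
          have hri : cs.IsRightInversion g (s i) := ⟨cs.isReflection_simple i, by omega⟩
          have := (isRightInversion_iff_eta cs (cs.isReflection_simple i)).mp hri
          rw [hgs] at this
          revert this
          decide
      have hfin : N.Finite := by
        rw [hNeq]; exact Nfin'.image c
      have hcard : N.ncard = N'.ncard := by
        rw [hNeq]
        exact Set.ncard_image_of_injective N' hcinj
      refine ⟨hfin, ?_⟩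
      rw [hcard]
      omega
    · -- Case B : `s i` is a right inversion of `g`.
      have hgslt : ℓ (g * s i) < ℓ g :=
        length_mul_lt_of_eta_eq_one cs (ℓ g) g (s i) rfl hgs
      have hgl : ℓ (g * s i) + 1 = ℓ g := by
        rcases cs.length_mul_simple g i with h' | h' <;> omega
      have hsN : s i ∈ N := by
        rw [memN]
        exact ⟨cs.isReflection_simple i, hgs, etahs⟩
      have hNeq : N = insert (s i) (c '' N') := by
        ext u
        rw [Set.mem_insert_iff, himg]
        rcases eq_or_ne u (s i) with rfl | hune
        · simp only [true_or, iff_true]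
          exact hsN
        · simp only [hune, false_or]
          exact claim1 u hune
      have hnotmem : s i ∉ c '' N' := by
        rw [himg, hcs]
        exact claim2
      have hfin : N.Finite := by
        rw [hNeq]
        exact (Nfin'.image c).insert _
      have hcard : N.ncard = N'.ncard + 1 := by
        rw [hNeq, Set.ncard_insert_of_notMem hnotmem (Nfin'.image c),
          Set.ncard_image_of_injective N' hcinj]
      refine ⟨hfin, ?_⟩
      rw [hcard]
      omega

end CoxeterHR

/-- **Hart–Rowley, Lemma 2.2.** For elements `g, h` of a Coxeter group,
`ℓ(g h) = ℓ(g) + ℓ(h) − 2 N`, where `N` is the number of reflections that are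
simultaneously a right inversion of `g` and a left inversion of `h`
(stated additively to avoid natural-number subtraction). -/
theorem length_mul_eq_add_sub_two_mul_card_inversions {B W : Type*} [Group W]
    {M : CoxeterMatrix B} (cs : CoxeterSystem M W) (g h : W) :
    cs.length g + cs.length h =
      cs.length (g * h) +
        2 * {t : W | cs.IsRightInversion g t ∧ cs.IsLeftInversion h t}.ncard := by
  exact (CoxeterHR.main cs (cs.length h) g h rfl).2
end

section
/- Let n ≥ 2, let w = (1 2 ⋯ n) ∈ Sym(n), and let y_k (0 ≤ k ≤ n−1) be as below. Then ℓ(w y_k) + ℓ(y_k) − ℓ(w) = 2k² − 2k(n−1) + n² − 3n + 2, where ℓ denotes the inversion number. -/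
/-- The inversion number of a permutation of `{0, …, n−1}`, which equals the Coxeter
length of the permutation in `W(A_{n−1}) ≅ Sym(n)`. -/
def invNum {n : ℕ} (σ : Equiv.Perm (Fin n)) : ℕ :=
  (Finset.univ.filter fun p : Fin n × Fin n => p.1 < p.2 ∧ σ p.2 < σ p.1).card

/-- The underlying function of `y_k`: `j ↦ k - 1 - j` for `j < k` and
`j ↦ n + k - 1 - j` for `k ≤ j < n` (the zero-indexed form of the permutation of
`{1, …, n}` sending `i ↦ k + 1 - i` for `1 ≤ i ≤ k` and `i ↦ n + k + 1 - i` for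
`k + 1 ≤ i ≤ n`). -/
def ykFun (n k : ℕ) (hk : k ≤ n) (j : Fin n) : Fin n :=
  if _h : (j : ℕ) < k then ⟨k - 1 - j, by omega⟩ else ⟨n + k - 1 - j, by omega⟩

lemma ykFun_involutive (n k : ℕ) (hk : k ≤ n) : Function.Involutive (ykFun n k hk) := by
  intro j
  unfold ykFun
  by_cases h1 : (j : ℕ) < k
  · rw [dif_pos h1, dif_pos (by simp; omega)]
    apply Fin.ext; simp; omega
  · rw [dif_neg h1, dif_neg (by simp; omega)]
    apply Fin.ext; simp; omega

/-- The involution `y_k` of Hart–Rowley, Proposition 2.8. -/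
def yk (n k : ℕ) (hk : k ≤ n) : Equiv.Perm (Fin n) := (ykFun_involutive n k hk).toPerm


open Finset
open Fin.NatCast
lemma yk_val (n k : ℕ) (hk : k ≤ n) [NeZero n] (b : ℕ) (hb : b < n) :
    ((yk n k hk (b : Fin n)) : ℕ) = if b < k then k - 1 - b else n + k - 1 - b := by
  have hval : ((b : Fin n) : ℕ) = b := Fin.val_cast_of_lt hb
  simp only [yk, Function.Involutive.coe_toPerm, ykFun, hval]
  split_ifs <;> simp

lemma rot_val (n : ℕ) [NeZero n] (x : Fin n) :
    ((finRotate n x) : ℕ) = if (x : ℕ) = n - 1 then 0 else (x : ℕ) + 1 := by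
  cases n with
  | zero => exact absurd rfl (NeZero.ne 0)
  | succ m =>
    rw [finRotate_succ_apply, Fin.val_add_one]
    simp [Fin.ext_iff, Fin.last]

lemma wyk_val (n k : ℕ) (hk : k ≤ n) (hk1 : k ≤ n - 1) (hn : 2 ≤ n) [NeZero n]
    (b : ℕ) (hb : b < n) :
    (((finRotate n * yk n k hk) (b : Fin n)) : ℕ) =
      if b < k then k - b else if b = k then 0 else n + k - b := by
  rw [Equiv.Perm.mul_apply, rot_val, yk_val n k hk b hb]
  split_ifs <;> omega

lemma invNum_eq_sum {n : ℕ} [NeZero n] (σ : Equiv.Perm (Fin n)) :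
    invNum σ = ∑ a ∈ range n, ∑ b ∈ range n,
      if a < b ∧ ((σ (b : Fin n)) : ℕ) < ((σ (a : Fin n)) : ℕ) then 1 else 0 := by
  rw [invNum, card_filter, Fintype.sum_prod_type]
  rw [← Fin.sum_univ_eq_sum_range (fun a => ∑ b ∈ range n,
      if a < b ∧ ((σ (b : Fin n)) : ℕ) < ((σ (a : Fin n)) : ℕ) then 1 else 0)]
  refine Finset.sum_congr rfl fun a _ => ?_
  rw [← Fin.sum_univ_eq_sum_range]
  refine Finset.sum_congr rfl fun b _ => ?_
  rw [Fin.cast_val_eq_self, Fin.cast_val_eq_self]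
  simp only [Fin.lt_def]

lemma inner_card {n : ℕ} (f : ℕ → ℕ) (a x y : ℕ) (hy : y ≤ n)
    (h : ∀ b < n, (a < b ∧ f b < f a) ↔ (x ≤ b ∧ b < y)) :
    (∑ b ∈ range n, if a < b ∧ f b < f a then 1 else 0) = y - x := by
  rw [← card_filter]
  have : (range n).filter (fun b => a < b ∧ f b < f a) = Ico x y := by
    ext b
    simp only [mem_filter, mem_range, mem_Ico]
    constructor
    · rintro ⟨hb, hc⟩; exact (h b hb).1 hc
    · rintro ⟨h1, h2⟩
      have hb : b < n := lt_of_lt_of_le h2 hy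
      exact ⟨hb, (h b hb).2 ⟨h1, h2⟩⟩
  rw [this, Nat.card_Ico]

lemma sum_reflect_id (t : ℕ) : ∑ j ∈ range t, (t - 1 - j) = ∑ j ∈ range t, j :=
  Finset.sum_range_reflect (fun i => i) t

lemma invNum_yk (n k : ℕ) (hn : 1 ≤ n) (hk : k ≤ n) :
    invNum (yk n k hk) = (∑ i ∈ range k, i) + ∑ i ∈ range (n - k), i := by
  haveI : NeZero n := ⟨by omega⟩
  rw [invNum_eq_sum]
  have key : ∀ a ∈ range n,
      (∑ b ∈ range n, if a < b ∧ ((yk n k hk (b : Fin n)) : ℕ) < ((yk n k hk (a : Fin n)) : ℕ)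
        then 1 else 0) = (if a < k then k else n) - (a + 1) := by
    intro a ha; rw [mem_range] at ha
    have step : (∑ b ∈ range n, if a < b ∧ ((yk n k hk (b : Fin n)) : ℕ) <
        ((yk n k hk (a : Fin n)) : ℕ) then 1 else 0)
        = ∑ b ∈ range n, if a < b ∧
            (if b < k then k - 1 - b else n + k - 1 - b) <
            (if a < k then k - 1 - a else n + k - 1 - a) then 1 else 0 := by
      refine Finset.sum_congr rfl fun b hb => ?_
      rw [mem_range] at hb
      rw [yk_val n k hk b hb, yk_val n k hk a ha]
    rw [step]
    exact inner_card (fun b => if b < k then k - 1 - b else n + k - 1 - b) a (a + 1)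
      (if a < k then k else n) (by split_ifs <;> omega)
      (fun b hb => by split_ifs <;> omega)
  rw [Finset.sum_congr rfl key]
  have split : (∑ a ∈ range n, ((if a < k then k else n) - (a + 1)))
      = (∑ a ∈ Ico 0 k, ((if a < k then k else n) - (a + 1)))
        + ∑ a ∈ Ico k n, ((if a < k then k else n) - (a + 1)) := by
    rw [range_eq_Ico]
    exact (Finset.sum_Ico_consecutive _ (Nat.zero_le k) hk).symm
  have p1 : (∑ a ∈ Ico 0 k, ((if a < k then k else n) - (a + 1))) = ∑ i ∈ range k, i :=
    calc (∑ a ∈ Ico 0 k, ((if a < k then k else n) - (a + 1)))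
        = ∑ a ∈ range k, (k - 1 - a) := by
          rw [← range_eq_Ico]
          exact Finset.sum_congr rfl fun a ha => by
            rw [mem_range] at ha; rw [if_pos ha]; omega
      _ = ∑ i ∈ range k, i := sum_reflect_id k
  have p2 : (∑ a ∈ Ico k n, ((if a < k then k else n) - (a + 1))) = ∑ i ∈ range (n - k), i :=
    calc (∑ a ∈ Ico k n, ((if a < k then k else n) - (a + 1)))
        = ∑ j ∈ range (n - k), ((n - k) - 1 - j) := by
          rw [Finset.sum_Ico_eq_sum_range]
          exact Finset.sum_congr rfl fun j hj => by
            rw [mem_range] at hj; rw [if_neg (by omega)]; omega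
      _ = ∑ i ∈ range (n - k), i := sum_reflect_id (n - k)
  rw [split, p1, p2]

lemma invNum_rot (n : ℕ) (hn : 1 ≤ n) : invNum (finRotate n) = n - 1 := by
  haveI : NeZero n := ⟨by omega⟩
  rw [invNum_eq_sum]
  have key : ∀ a ∈ range n,
      (∑ b ∈ range n, if a < b ∧ ((finRotate n (b : Fin n)) : ℕ) < ((finRotate n (a : Fin n)) : ℕ)
        then 1 else 0) = n - (if a = n - 1 then n else n - 1) := by
    intro a ha; rw [mem_range] at ha
    have step : (∑ b ∈ range n, if a < b ∧ ((finRotate n (b : Fin n)) : ℕ) <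
        ((finRotate n (a : Fin n)) : ℕ) then 1 else 0)
        = ∑ b ∈ range n, if a < b ∧
            (if b = n - 1 then 0 else b + 1) < (if a = n - 1 then 0 else a + 1) then 1 else 0 := by
      refine Finset.sum_congr rfl fun b hb => ?_
      rw [mem_range] at hb
      rw [rot_val n, rot_val n, Fin.val_cast_of_lt hb, Fin.val_cast_of_lt ha]
    rw [step]
    exact inner_card (fun b => if b = n - 1 then 0 else b + 1) a
      (if a = n - 1 then n else n - 1) n (le_refl n)
      (fun b hb => by split_ifs <;> omega)
  rw [Finset.sum_congr rfl key]
  obtain ⟨s, rfl⟩ : ∃ s, n = s + 1 := ⟨n - 1, by omega⟩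
  rw [Finset.sum_range_succ]
  simp only [Nat.add_sub_cancel, if_pos rfl, Nat.sub_self, add_zero]
  rw [Finset.sum_congr rfl (fun a ha => by
    rw [mem_range] at ha
    rw [if_neg (by omega)] : ∀ a ∈ range s, _ = s + 1 - s)]
  simp

lemma invNum_wyk (n k : ℕ) (hn : 2 ≤ n) (hk1 : k ≤ n - 1) (hk : k ≤ n) :
    invNum (finRotate n * yk n k hk)
      = ((∑ i ∈ range k, i) + k) + ∑ i ∈ range (n - k - 1), i := by
  haveI : NeZero n := ⟨by omega⟩
  rw [invNum_eq_sum]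
  set σ := finRotate n * yk n k hk with hσ
  have key : ∀ a ∈ range n,
      (∑ b ∈ range n, if a < b ∧ ((σ (b : Fin n)) : ℕ) < ((σ (a : Fin n)) : ℕ)
        then 1 else 0)
      = (if a < k then k + 1 else if a = k then a + 1 else n) - (a + 1) := by
    intro a ha; rw [mem_range] at ha
    have step : (∑ b ∈ range n, if a < b ∧ ((σ (b : Fin n)) : ℕ) < ((σ (a : Fin n)) : ℕ)
        then 1 else 0)
        = ∑ b ∈ range n, if a < b ∧
            (if b < k then k - b else if b = k then 0 else n + k - b) <
            (if a < k then k - a else if a = k then 0 else n + k - a) then 1 else 0 := by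
      refine Finset.sum_congr rfl fun b hb => ?_
      rw [mem_range] at hb
      rw [hσ, wyk_val n k hk hk1 hn b hb, wyk_val n k hk hk1 hn a ha]
    rw [step]
    exact inner_card (fun b => if b < k then k - b else if b = k then 0 else n + k - b) a
      (a + 1) (if a < k then k + 1 else if a = k then a + 1 else n)
      (by split_ifs <;> omega)
      (fun b hb => by split_ifs <;> omega)
  rw [Finset.sum_congr rfl key]
  have split : (∑ a ∈ range n, ((if a < k then k + 1 else if a = k then a + 1 else n) - (a + 1)))
      = (∑ a ∈ Ico 0 k, ((if a < k then k + 1 else if a = k then a + 1 else n) - (a + 1)))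
        + ∑ a ∈ Ico k n, ((if a < k then k + 1 else if a = k then a + 1 else n) - (a + 1)) := by
    rw [range_eq_Ico]
    exact (Finset.sum_Ico_consecutive _ (Nat.zero_le k) hk).symm
  have p1 : (∑ a ∈ Ico 0 k, ((if a < k then k + 1 else if a = k then a + 1 else n) - (a + 1)))
      = (∑ i ∈ range k, i) + k :=
    calc (∑ a ∈ Ico 0 k, ((if a < k then k + 1 else if a = k then a + 1 else n) - (a + 1)))
        = ∑ a ∈ range k, ((k - 1 - a) + 1) := by
          rw [← range_eq_Ico]
          exact Finset.sum_congr rfl fun a ha => by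
            rw [mem_range] at ha; rw [if_pos ha]; omega
      _ = (∑ a ∈ range k, (k - 1 - a)) + ∑ a ∈ range k, 1 := Finset.sum_add_distrib
      _ = (∑ i ∈ range k, i) + k := by rw [sum_reflect_id k]; simp
  have p2 : (∑ a ∈ Ico k n, ((if a < k then k + 1 else if a = k then a + 1 else n) - (a + 1)))
      = ∑ i ∈ range (n - k - 1), i :=
    calc (∑ a ∈ Ico k n, ((if a < k then k + 1 else if a = k then a + 1 else n) - (a + 1)))
        = ∑ j ∈ range (n - k), (if j = 0 then 0 else n - k - j - 1) := by
          rw [Finset.sum_Ico_eq_sum_range]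
          refine Finset.sum_congr rfl fun j hj => ?_
          rw [mem_range] at hj
          by_cases h0 : j = 0
          · subst h0; rw [if_neg (by omega), if_pos (by omega), if_pos rfl]; omega
          · rw [if_neg (by omega), if_neg (by omega), if_neg h0]; omega
      _ = (∑ i ∈ range (n - k - 1), (if i + 1 = 0 then 0 else n - k - (i + 1) - 1))
            + (if (0 : ℕ) = 0 then 0 else n - k - 0 - 1) := by
          rw [show n - k = (n - k - 1) + 1 by omega, Finset.sum_range_succ']
          simp
      _ = ∑ i ∈ range (n - k - 1), ((n - k - 1) - 1 - i) := by
          rw [if_pos rfl, add_zero]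
          exact Finset.sum_congr rfl fun i hi => by
            rw [mem_range] at hi; rw [if_neg (by omega)]; omega
      _ = ∑ i ∈ range (n - k - 1), i := sum_reflect_id (n - k - 1)
  rw [split, p1, p2]

lemma gaussZ (t : ℕ) : ((∑ i ∈ range t, i : ℕ) : ℤ) * 2 = (t : ℤ) ^ 2 - t := by
  cases t with
  | zero => simp
  | succ s =>
    have h := Finset.sum_range_id_mul_two (s + 1)
    rw [Nat.succ_sub_one] at h
    have h2 : ((∑ i ∈ range (s + 1), i : ℕ) : ℤ) * 2 = ((s + 1) * s : ℕ) := by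
      exact_mod_cast congrArg (Nat.cast : ℕ → ℤ) h
    rw [h2]; push_cast; ring


/-- **Hart–Rowley, proof of Proposition 2.8.** For the `n`-cycle `w = (1 2 ⋯ n)`
(zero-indexed: `finRotate n`), one has
`ℓ(w y_k) + ℓ(y_k) − ℓ(w) = 2k² − 2k(n−1) + n² − 3n + 2`. -/
theorem invNum_identity_for_yk (n k : ℕ) (hn : 2 ≤ n) (hk : k ≤ n - 1) :
    (invNum (finRotate n * yk n k (by omega)) : ℤ) + invNum (yk n k (by omega)) -
        invNum (finRotate n) =
      2 * (k : ℤ) ^ 2 - 2 * k * ((n : ℤ) - 1) + (n : ℤ) ^ 2 - 3 * n + 2 := by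
  rw [invNum_wyk n k hn hk (by omega), invNum_yk n k (by omega) (by omega),
    invNum_rot n (by omega)]
  have g1 := gaussZ k
  have g2 := gaussZ (n - k)
  have g3 := gaussZ (n - k - 1)
  have c1 : ((n - k : ℕ) : ℤ) = (n : ℤ) - k := by omega
  have c2 : ((n - k - 1 : ℕ) : ℤ) = (n : ℤ) - k - 1 := by omega
  have c3 : ((n - 1 : ℕ) : ℤ) = (n : ℤ) - 1 := by omega
  rw [c1] at g2
  rw [c2] at g3
  push_cast at g1 g2 g3 ⊢
  rw [c3]
  nlinarith [g1, g2, g3]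
end

section
/- Let n ≥ 2 and let w = (1 2 ⋯ n) ∈ Sym(n). Then the excess of w is e(w) = ⌊(n−2)²/2⌋. -/
/-- The excess of a permutation `w`:
`e(w) = min{ℓ(x) + ℓ(y) − ℓ(w) : w = xy, x² = 1 = y²}`. -/
noncomputable def excess {n : ℕ} (w : Equiv.Perm (Fin n)) : ℕ :=
  sInf {m : ℕ | ∃ x y : Equiv.Perm (Fin n), x ^ 2 = 1 ∧ y ^ 2 = 1 ∧ w = x * y ∧
    m = invNum x + invNum y - invNum w}

section Aux

variable {n : ℕ}

private lemma valSub (a b : Fin n) :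
    (a - b).val = if b.val ≤ a.val then a.val - b.val else n + a.val - b.val := by
  have hb := b.isLt
  have ha := a.isLt
  rw [Fin.sub_def]
  simp only [Fin.val_mk]
  split_ifs with h
  · have h2 : n - b.val + a.val = (a.val - b.val) + n := by omega
    rw [h2, Nat.add_mod_right, Nat.mod_eq_of_lt (by omega)]
  · rw [Nat.mod_eq_of_lt (by omega)]; omega

private lemma two_mul_card_lt (n : ℕ) :
    2 * ((Finset.univ : Finset (Fin n × Fin n)).filter fun p => p.1 < p.2).card + n = n ^ 2 := by
  classical
  have h1 := Finset.card_filter_add_card_filter_not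
    (s := (Finset.univ : Finset (Fin n × Fin n))) (p := fun p => p.1 < p.2)
  have hsplit : ((Finset.univ : Finset (Fin n × Fin n)).filter fun p => ¬ p.1 < p.2)
      = ((Finset.univ : Finset (Fin n × Fin n)).filter fun p => p.2 < p.1)
        ∪ ((Finset.univ : Finset (Fin n × Fin n)).filter fun p => p.1 = p.2) := by
    ext p
    simp only [Finset.mem_filter, Finset.mem_union, Finset.mem_univ, true_and, not_lt]
    constructor
    · intro h; rcases lt_or_eq_of_le h with h' | h'
      · exact Or.inl h'
      · exact Or.inr h'.symm
    · rintro (h | h)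
      · exact le_of_lt h
      · exact le_of_eq h.symm
  have hdis : Disjoint ((Finset.univ : Finset (Fin n × Fin n)).filter fun p => p.2 < p.1)
      ((Finset.univ : Finset (Fin n × Fin n)).filter fun p => p.1 = p.2) := by
    rw [Finset.disjoint_left]
    intro p hp hq
    simp only [Finset.mem_filter] at hp hq
    exact absurd hq.2 (ne_of_gt hp.2)
  have hswap : ((Finset.univ : Finset (Fin n × Fin n)).filter fun p => p.2 < p.1).card
      = ((Finset.univ : Finset (Fin n × Fin n)).filter fun p => p.1 < p.2).card := by
    apply Finset.card_bij' (fun p _ => p.swap) (fun p _ => p.swap) <;>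
      simp [Finset.mem_filter]
  have hdiag : ((Finset.univ : Finset (Fin n × Fin n)).filter fun p => p.1 = p.2).card = n := by
    have : ((Finset.univ : Finset (Fin n × Fin n)).filter fun p => p.1 = p.2)
        = Finset.diag Finset.univ := by
      ext p; simp [Finset.mem_diag]
    rw [this, Finset.diag_card, Finset.card_univ, Fintype.card_fin]
  rw [hsplit, Finset.card_union_of_disjoint hdis, hswap, hdiag] at h1
  simp only [Finset.card_univ, Fintype.card_prod, Fintype.card_fin] at h1
  nlinarith [h1]

private lemma key_iff (c i j : Fin n) (hij : i < j) :
    c - j < c - i ↔ ¬(i ≤ c ∧ c < j) := by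
  have h1 := valSub c i
  have h2 := valSub c j
  have hi := i.isLt
  have hj := j.isLt
  have hc := c.isLt
  rw [Fin.lt_def] at hij ⊢
  rw [Fin.lt_def, Fin.le_def]
  rw [h1, h2]
  split_ifs <;> omega

private lemma invNum_subLeft [NeZero n] (c : Fin n) :
    invNum (Equiv.subLeft c) + (c.val + 1) * (n - 1 - c.val)
      = ((Finset.univ : Finset (Fin n × Fin n)).filter fun p => p.1 < p.2).card := by
  classical
  have hmid : ((Finset.univ : Finset (Fin n × Fin n)).filter fun p => p.1 ≤ c ∧ c < p.2)
      = Finset.Iic c ×ˢ Finset.Ioi c := by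
    ext p
    simp [Finset.mem_product]
  have hcard : ((Finset.univ : Finset (Fin n × Fin n)).filter fun p => p.1 ≤ c ∧ c < p.2).card
      = (c.val + 1) * (n - 1 - c.val) := by
    rw [hmid, Finset.card_product, Fin.card_Iic, Fin.card_Ioi]
  have hunion : ((Finset.univ : Finset (Fin n × Fin n)).filter fun p => p.1 < p.2)
      = (Finset.univ.filter fun p : Fin n × Fin n =>
          p.1 < p.2 ∧ (Equiv.subLeft c) p.2 < (Equiv.subLeft c) p.1)
        ∪ (Finset.univ.filter fun p : Fin n × Fin n => p.1 ≤ c ∧ c < p.2) := by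
    ext p
    simp only [Finset.mem_filter, Finset.mem_union, Finset.mem_univ, true_and,
      Equiv.subLeft_apply]
    constructor
    · intro h
      by_cases hb : p.1 ≤ c ∧ c < p.2
      · exact Or.inr hb
      · exact Or.inl ⟨h, (key_iff c p.1 p.2 h).2 hb⟩
    · rintro (⟨h, _⟩ | ⟨h1, h2⟩)
      · exact h
      · exact lt_of_le_of_lt h1 h2
  have hdis : Disjoint
      (Finset.univ.filter fun p : Fin n × Fin n =>
        p.1 < p.2 ∧ (Equiv.subLeft c) p.2 < (Equiv.subLeft c) p.1)
      (Finset.univ.filter fun p : Fin n × Fin n => p.1 ≤ c ∧ c < p.2) := by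
    rw [Finset.disjoint_left]
    intro p hp hq
    simp only [Finset.mem_filter, Finset.mem_univ, true_and, Equiv.subLeft_apply] at hp hq
    exact ((key_iff c p.1 p.2 hp.1).1 hp.2) hq
  rw [hunion, Finset.card_union_of_disjoint hdis, hcard]
  rfl

private lemma invNum_finRotate (m : ℕ) : invNum (finRotate (m + 2)) = m + 1 := by
  classical
  have hset : (Finset.univ.filter fun p : Fin (m+2) × Fin (m+2) =>
      p.1 < p.2 ∧ finRotate (m+2) p.2 < finRotate (m+2) p.1)
      = Finset.Iio (Fin.last (m+1)) ×ˢ {Fin.last (m+1)} := by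
    ext p
    simp only [Finset.mem_filter, Finset.mem_univ, true_and, Finset.mem_product,
      Finset.mem_Iio, Finset.mem_singleton, finRotate_succ_apply]
    have h1 := Fin.val_add_one p.1
    have h2 := Fin.val_add_one p.2
    have hi := p.1.isLt
    have hj := p.2.isLt
    rw [Fin.lt_def, Fin.lt_def, Fin.lt_def, Fin.ext_iff]
    split_ifs at h1 h2 <;> simp only [Fin.ext_iff, Fin.val_last] at * <;> omega
  rw [invNum, hset, Finset.card_product, Fin.card_Iio, Finset.card_singleton, Fin.val_last,
    mul_one]

private lemma witness_val (m : ℕ) (hklt : (m+2)/2 < m+2) :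
    invNum (Equiv.subLeft (⟨(m+2)/2, hklt⟩ : Fin (m+2))) +
      invNum (Equiv.subLeft ((⟨(m+2)/2, hklt⟩ : Fin (m+2)) - 1)) = (m + 1) + m^2/2 := by
  have h1 := invNum_subLeft (⟨(m+2)/2, hklt⟩ : Fin (m+2))
  have h2 := invNum_subLeft ((⟨(m+2)/2, hklt⟩ : Fin (m+2)) - 1)
  have hA := two_mul_card_lt (m+2)
  have hkv : (⟨(m+2)/2, hklt⟩ : Fin (m+2)).val = (m+2)/2 := rfl
  have hk1v : ((⟨(m+2)/2, hklt⟩ : Fin (m+2)) - 1).val = (m+2)/2 - 1 := by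
    rw [valSub, Fin.val_one, hkv, if_pos (by omega)]
  rw [hkv] at h1; rw [hk1v] at h2
  obtain ⟨Ix, hIx⟩ : ∃ t, invNum (Equiv.subLeft (⟨(m+2)/2, hklt⟩ : Fin (m+2))) = t := ⟨_, rfl⟩
  obtain ⟨Iy, hIy⟩ : ∃ t, invNum (Equiv.subLeft ((⟨(m+2)/2, hklt⟩ : Fin (m+2)) - 1)) = t :=
    ⟨_, rfl⟩
  obtain ⟨A, hAe⟩ : ∃ t,
      ((Finset.univ : Finset (Fin (m+2) × Fin (m+2))).filter fun p => p.1 < p.2).card = t :=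
    ⟨_, rfl⟩
  rw [hIx] at h1 ⊢
  rw [hIy] at h2 ⊢
  rw [hAe] at h1 h2 hA
  rcases Nat.even_or_odd m with ⟨j, hj⟩ | ⟨j, hj⟩
  · subst hj
    have e0 : (j+j+2)/2 = j+1 := by omega
    rw [e0] at h1 h2
    have e1 : j+j+2-1-(j+1) = j := by omega
    have e2 : (j+1-1) = j := by omega
    have e3 : j+j+2-1-j = j+1 := by omega
    rw [e1] at h1; rw [e2, e3] at h2
    have hsq : (j+j)^2 = (2*j^2)*2 := by ring
    rw [hsq, Nat.mul_div_cancel _ (by norm_num : 0 < 2)]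
    zify at h1 h2 hA ⊢
    linear_combination h1 + h2 + hA
  · subst hj
    have e0 : (2*j+1+2)/2 = j+1 := by omega
    rw [e0] at h1 h2
    have e1 : 2*j+1+2-1-(j+1) = j+1 := by omega
    have e2 : (j+1-1) = j := by omega
    have e3 : 2*j+1+2-1-j = j+2 := by omega
    rw [e1] at h1; rw [e2, e3] at h2
    have hsq : (2*j+1)^2 = 2*(2*j^2+2*j)+1 := by ring
    rw [hsq, Nat.mul_add_div (by norm_num : 0 < 2)]
    norm_num
    zify at h1 h2 hA ⊢
    linear_combination h1 + h2 + hA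

private lemma bound_val (m : ℕ) (k : Fin (m+2)) :
    m^2/2 + (m+1) ≤ invNum (Equiv.subLeft k) + invNum (Equiv.subLeft (k - 1)) := by
  have h1 := invNum_subLeft k
  have h2 := invNum_subLeft (k-1)
  have hA := two_mul_card_lt (m+2)
  have hkv := k.isLt
  have hk1 : (k-1).val = if 1 ≤ k.val then k.val - 1 else m + 1 := by
    rw [valSub, Fin.val_one]
    split_ifs with h
    · rfl
    · omega
  have key : m^2 + 2*(m+1)
      ≤ 2*(invNum (Equiv.subLeft k)) + 2*(invNum (Equiv.subLeft (k-1))) + 1 := by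
    rw [hk1] at h2
    by_cases h : 1 ≤ k.val
    · rw [if_pos h] at h2
      have e1 : k.val - 1 + 1 = k.val := by omega
      have e2 : m+2-1-(k.val-1) = m+2-k.val := by omega
      have e3 : m+2-1-k.val = m+1-k.val := by omega
      rw [e1, e2] at h2; rw [e3] at h1
      zify [show k.val ≤ m+1 from by omega, show k.val ≤ m+2 from by omega] at h1 h2 hA ⊢
      nlinarith [sq_nonneg ((m:ℤ) + 1 - 2*(k.val : ℤ)), h1, h2, hA]
    · rw [if_neg h] at h2
      have hk0 : k.val = 0 := by omega
      rw [hk0] at h1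
      have e1 : m+2-1-0 = m+1 := by omega
      have e2 : m+2-1-(m+1) = 0 := by omega
      rw [e1] at h1; rw [e2] at h2
      simp only [Nat.mul_zero, Nat.add_zero] at h2
      zify at h1 h2 hA ⊢
      nlinarith [sq_nonneg ((m:ℤ)+1), h1, h2, hA]
  obtain ⟨s, hs⟩ : ∃ s, m^2 = s := ⟨_, rfl⟩
  rw [hs] at key ⊢
  omega

private lemma decomp (m : ℕ) (x y : Equiv.Perm (Fin (m+2))) (hx : x ^ 2 = 1) (hy : y ^ 2 = 1)
    (hxy : finRotate (m+2) = x * y) :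
    x = Equiv.subLeft (x 0) ∧ y = Equiv.subLeft (x 0 - 1) := by
  have hx' : x * x = 1 := by rwa [sq] at hx
  have hyw : y = x * finRotate (m+2) := by
    rw [hxy, ← mul_assoc, hx', one_mul]
  have h4 : (x * finRotate (m+2)) * (x * finRotate (m+2)) = 1 := by
    rw [← hyw, ← sq, hy]
  have h5 : x * finRotate (m+2) * x = (finRotate (m+2))⁻¹ :=
    eq_inv_of_mul_eq_one_left (by rw [mul_assoc (x * finRotate (m+2)) x]; exact h4)
  have h6 : x * (finRotate (m+2))⁻¹ = finRotate (m+2) * x := by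
    rw [← h5]
    calc x * (x * finRotate (m+2) * x) = (x * x) * (finRotate (m+2) * x) := by group
      _ = finRotate (m+2) * x := by rw [hx', one_mul]
  set r : Equiv.Perm (Fin (m+2)) := Equiv.subLeft 0 with hrdef
  have hrr : ∀ i, r (r i) = i := by
    intro i; simp [hrdef, Equiv.subLeft_apply, sub_sub_cancel]
  have hrw : r * finRotate (m+2) = (finRotate (m+2))⁻¹ * r := by
    apply Equiv.ext; intro i
    apply (finRotate (m+2)).injective
    simp only [Equiv.Perm.mul_apply, Equiv.Perm.coe_inv, Equiv.apply_symm_apply, hrdef, Equiv.subLeft_apply,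
      finRotate_succ_apply]
    open Fin.CommRing in ring
  have hc : (x * r) * finRotate (m+2) = finRotate (m+2) * (x * r) := by
    calc (x * r) * finRotate (m+2) = x * (r * finRotate (m+2)) := by group
      _ = x * ((finRotate (m+2))⁻¹ * r) := by rw [hrw]
      _ = (x * (finRotate (m+2))⁻¹) * r := by group
      _ = (finRotate (m+2) * x) * r := by rw [h6]
      _ = finRotate (m+2) * (x * r) := by group
  have hstep : ∀ i : Fin (m+2), (x*r) (i + 1) = (x*r) i + 1 := by
    intro i
    have h := congrArg (fun σ : Equiv.Perm (Fin (m+2)) => σ i) hc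
    simp only [Equiv.Perm.mul_apply, finRotate_succ_apply] at h
    exact h
  have hlin : ∀ (v : ℕ) (hv : v < m + 2), (x*r) ⟨v, hv⟩ = (x*r) 0 + ⟨v, hv⟩ := by
    intro v
    induction v with
    | zero => intro hv; simp
    | succ v ih =>
      intro hv
      have hv' : v < m + 2 := by omega
      have hlt : (⟨v, hv'⟩ : Fin (m+2)) < Fin.last (m+1) := by
        rw [Fin.lt_def]; simp only [Fin.val_last]; omega
      have hmk : (⟨v+1, hv⟩ : Fin (m+2)) = ⟨v, hv'⟩ + 1 := by
        apply Fin.ext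
        rw [Fin.val_add_one_of_lt hlt]
      rw [hmk, hstep, ih hv', add_assoc]
  have hlin' : ∀ i : Fin (m+2), (x*r) i = (x*r) 0 + i := by
    intro i
    have h := hlin i.val i.isLt
    simpa using h
  have hx0 : (x*r) 0 = x 0 := by
    simp [Equiv.Perm.mul_apply, hrdef, Equiv.subLeft_apply, sub_zero]
  have hxap : ∀ i, x i = x 0 - i := by
    intro i
    have h7 : x i = (x*r) (r i) := by simp [Equiv.Perm.mul_apply, hrr]
    rw [h7, hlin' (r i), hx0]
    simp only [hrdef, Equiv.subLeft_apply]
    open Fin.CommRing in ring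
  constructor
  · apply Equiv.ext; intro i
    rw [hxap i, Equiv.subLeft_apply]
  · apply Equiv.ext; intro i
    rw [hyw]
    simp only [Equiv.Perm.mul_apply, finRotate_succ_apply, Equiv.subLeft_apply]
    rw [hxap (i+1)]
    open Fin.CommRing in ring

end Aux

/-- **Hart–Rowley, Proposition 2.8(iv).** The excess of the `n`-cycle `w = (1 2 ⋯ n)`
(zero-indexed: `finRotate n`) is `⌊(n−2)²/2⌋`. -/
theorem excess_of_cycle (n : ℕ) (hn : 2 ≤ n) :
    excess (finRotate n) = (n - 2) ^ 2 / 2 := by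
  obtain ⟨m, rfl⟩ : ∃ m, n = m + 2 := ⟨n - 2, by omega⟩
  have hred : m + 2 - 2 = m := by omega
  rw [hred]
  have hklt : (m+2)/2 < m+2 := by omega
  have hw : invNum (finRotate (m+2)) = m + 1 := invNum_finRotate m
  have hinvol : ∀ c : Fin (m+2), (Equiv.subLeft c) ^ 2 = 1 := by
    intro c
    rw [sq]
    apply Equiv.ext; intro i
    simp [Equiv.Perm.mul_apply, Equiv.subLeft_apply, sub_sub_cancel]
  have hprod : finRotate (m+2)
      = Equiv.subLeft (⟨(m+2)/2, hklt⟩ : Fin (m+2))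
        * Equiv.subLeft ((⟨(m+2)/2, hklt⟩ : Fin (m+2)) - 1) := by
    apply Equiv.ext; intro i
    simp only [Equiv.Perm.mul_apply, Equiv.subLeft_apply, finRotate_succ_apply]
    open Fin.CommRing in ring
  have hwit := witness_val m hklt
  have hmem : m^2/2 ∈ {mm : ℕ | ∃ x y : Equiv.Perm (Fin (m+2)), x ^ 2 = 1 ∧ y ^ 2 = 1 ∧
      finRotate (m+2) = x * y ∧ mm = invNum x + invNum y - invNum (finRotate (m+2))} := by
    refine ⟨_, _, hinvol _, hinvol _, hprod, ?_⟩
    rw [hw, hwit]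
    omega
  apply le_antisymm
  · exact Nat.sInf_le hmem
  · apply le_csInf ⟨_, hmem⟩
    rintro b ⟨x, y, hx2, hy2, hxy, rfl⟩
    obtain ⟨hxe, hye⟩ := decomp m x y hx2 hy2 hxy
    have hIx : invNum x = invNum (Equiv.subLeft (x 0)) := congrArg invNum hxe
    have hIy : invNum y = invNum (Equiv.subLeft (x 0 - 1)) := congrArg invNum hye
    rw [hIx, hIy, hw]
    have hb := bound_val m (x 0)
    obtain ⟨s, hs⟩ : ∃ s, m^2 = s := ⟨_, rfl⟩
    rw [hs] at hb ⊢
    omega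
end

section
/- For every natural number N there exist n ≥ 2 and a strongly real element w ∈ Sym(n) (namely the n-cycle (1 2 ⋯ n)) such that every decomposition w = xy with x² = 1 = y² satisfies ℓ(x) + ℓ(y) − ℓ(w) ≥ N; that is, elements of Coxeter groups can have arbitrarily large excess. -/
open Fin.NatCast in
lemma invNum_lb {n : ℕ} (σ : Equiv.Perm (Fin n)) (c m : ℕ) (hcm : c + m ≤ n)
    (h : ∀ i j : ℕ, i < j → j < m → ∀ (hi : c + i < n) (hj : c + j < n),
      σ ⟨c + j, hj⟩ < σ ⟨c + i, hi⟩) :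
    ∑ j ∈ Finset.range m, j ≤ invNum σ := by
  rcases Nat.eq_zero_or_pos m with hm | hm
  · simp [hm]
  have hn : 0 < n := by omega
  haveI : NeZero n := ⟨hn.ne'⟩
  have hsum : ∑ j ∈ Finset.range m, j
      = ((Finset.range m).sigma fun j => Finset.range j).card := by
    rw [Finset.card_sigma]; simp
  rw [hsum]
  unfold invNum
  apply Finset.card_le_card_of_injOn
    (fun p => (((c + p.2 : ℕ) : Fin n), ((c + p.1 : ℕ) : Fin n)))
  · intro p hp
    simp only [Finset.mem_coe, Finset.mem_sigma, Finset.mem_range] at hp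
    obtain ⟨h1, h2⟩ := hp
    have hj : c + p.1 < n := by omega
    have hi : c + p.2 < n := by omega
    have e1 : ((c + p.2 : ℕ) : Fin n) = ⟨c + p.2, hi⟩ := by
      apply Fin.ext; rw [Fin.val_natCast, Nat.mod_eq_of_lt hi]
    have e2 : ((c + p.1 : ℕ) : Fin n) = ⟨c + p.1, hj⟩ := by
      apply Fin.ext; rw [Fin.val_natCast, Nat.mod_eq_of_lt hj]
    simp only [Finset.mem_coe, Finset.mem_filter, Finset.mem_univ, true_and, e1, e2]
    refine ⟨?_, h _ _ h2 h1 hi hj⟩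
    simp only [Fin.mk_lt_mk]; omega
  · intro p hp q hq hpq
    simp only [Finset.mem_coe, Finset.mem_sigma, Finset.mem_range] at hp hq
    have h1 := congrArg (fun r : Fin n × Fin n => r.1.val) hpq
    have h2 := congrArg (fun r : Fin n × Fin n => r.2.val) hpq
    simp only [Fin.val_natCast] at h1 h2
    rw [Nat.mod_eq_of_lt (by omega), Nat.mod_eq_of_lt (by omega)] at h1
    rw [Nat.mod_eq_of_lt (by omega), Nat.mod_eq_of_lt (by omega)] at h2
    have hfst : p.fst = q.fst := by omega
    have hsnd : p.snd = q.snd := by omega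
    exact Sigma.ext hfst (heq_of_eq hsnd)

open Fin.CommRing in
lemma form_of_rec {n : ℕ} [NeZero n] (x : Equiv.Perm (Fin n))
    (hrec : ∀ k : Fin n, x (k + 1) = x k - 1) : ∀ i : Fin n, x i = x 0 - i := by
  have key : ∀ k : ℕ, x (k : Fin n) = x 0 - (k : Fin n) := by
    intro k
    induction k with
    | zero => simp
    | succ k ih =>
      have hc : ((k + 1 : ℕ) : Fin n) = (k : Fin n) + 1 := by push_cast; ring
      rw [hc, hrec, ih, sub_sub]
  intro i
  have := key i.val
  rwa [Fin.cast_val_eq_self] at this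

lemma invNum_ge {n : ℕ} [NeZero n] (x : Equiv.Perm (Fin n))
    (hform : ∀ i : Fin n, x i = x 0 - i) (m : ℕ) (hm : 2 * m ≤ n) :
    ∑ j ∈ Finset.range m, j ≤ invNum x := by
  set A := (x 0).val with hA
  have hAn : A < n := (x 0).isLt
  have hval : ∀ i : Fin n, (x i).val = (n - i.val + A) % n := by
    intro i; rw [hform i, Fin.sub_def]
  have hmod1 : ∀ v : ℕ, v ≤ A → (n - v + A) % n = A - v := by
    intro v hv
    have : n - v + A = (A - v) + n := by omega
    rw [this, Nat.add_mod_right, Nat.mod_eq_of_lt (by omega)]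
  have hmod2 : ∀ v : ℕ, A < v → v < n → (n - v + A) % n = n - v + A := by
    intro v h1 h2
    exact Nat.mod_eq_of_lt (by omega)
  by_cases hcase : m ≤ A + 1
  · refine le_trans (Finset.sum_le_sum_of_subset (Finset.range_subset_range.2 hcase)) ?_
    apply invNum_lb x 0 (A + 1) (by omega)
    intro i j hij hjm hi hj
    rw [Fin.lt_def, hval ⟨0 + j, hj⟩, hval ⟨0 + i, hi⟩]
    simp only
    rw [hmod1 (0 + j) (by omega), hmod1 (0 + i) (by omega)]
    omega
  · have h2 : m ≤ n - A - 1 := by omega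
    refine le_trans (Finset.sum_le_sum_of_subset (Finset.range_subset_range.2 h2)) ?_
    apply invNum_lb x (A + 1) (n - A - 1) (by omega)
    intro i j hij hjm hi hj
    rw [Fin.lt_def, hval ⟨A + 1 + j, hj⟩, hval ⟨A + 1 + i, hi⟩]
    simp only
    rw [hmod2 (A + 1 + j) (by omega) (by omega), hmod2 (A + 1 + i) (by omega) (by omega)]
    omega

lemma rec_of_conj {n : ℕ} (x : Equiv.Perm (Fin (n + 1))) (hinv : x * x = 1)
    (hc : x * finRotate (n + 1) * x = (finRotate (n + 1))⁻¹) :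
    ∀ k : Fin (n + 1), x (k + 1) = x k - 1 := by
  have hinv' : ∀ j, x (x j) = j := by
    intro j
    have := congrArg (fun σ : Equiv.Perm (Fin (n+1)) => σ j) hinv
    simpa [Equiv.Perm.mul_apply] using this
  have hrot_inv : ∀ j : Fin (n + 1), (finRotate (n + 1))⁻¹ j = j - 1 := by
    intro j
    apply (finRotate (n + 1)).injective
    rw [Equiv.Perm.inv_def, Equiv.apply_symm_apply, finRotate_succ_apply, sub_add_cancel]
  intro k
  have := congrArg (fun σ : Equiv.Perm (Fin (n+1)) => σ (x k)) hc
  simp only [Equiv.Perm.mul_apply, hinv' k, finRotate_succ_apply, hrot_inv] at this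
  exact this

lemma invNum_finRotate_le (M : ℕ) : invNum (finRotate (M + 1)) ≤ M + 1 := by
  unfold invNum
  have key : ∀ r : Fin (M+1) × Fin (M+1), r.1 < r.2 →
      finRotate (M+1) r.2 < finRotate (M+1) r.1 → r.2 = Fin.last M := by
    intro r h1 h2
    by_contra hne
    rw [finRotate_succ_apply, finRotate_succ_apply, Fin.lt_def, Fin.val_add_one,
      Fin.val_add_one] at h2
    rw [Fin.lt_def] at h1
    have hr1 : r.1 ≠ Fin.last M := by
      intro h
      have := congrArg Fin.val h
      simp [Fin.val_last] at this
      have := r.2.isLt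
      omega
    simp only [if_neg hne, if_neg hr1] at h2
    omega
  calc (Finset.univ.filter fun p : Fin (M+1) × Fin (M+1) =>
        p.1 < p.2 ∧ finRotate (M+1) p.2 < finRotate (M+1) p.1).card
      ≤ (Finset.univ : Finset (Fin (M+1))).card := by
        apply Finset.card_le_card_of_injOn (fun p => p.1) (fun a _ => Finset.mem_univ _)
        intro p hp q hq hpq
        simp only [Finset.mem_coe, Finset.mem_filter] at hp hq
        have e1 := key p hp.2.1 hp.2.2
        have e2 := key q hq.2.1 hq.2.2
        exact Prod.ext hpq (e1.trans e2.symm)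
    _ = M + 1 := by simp

/-- Elements of Coxeter groups can have arbitrarily large excess: for every `N` there
are `n ≥ 2` and a strongly real element `w` of `Sym(n)` — namely the `n`-cycle
`(1 2 ⋯ n)`, zero-indexed `finRotate n` — such that every decomposition `w = x y` with
`x² = 1 = y²` satisfies `ℓ(x) + ℓ(y) − ℓ(w) ≥ N`. -/
theorem arbitrarily_large_excess (N : ℕ) :
    ∃ n : ℕ, 2 ≤ n ∧ ∃ w : Equiv.Perm (Fin n), w = finRotate n ∧
      (∃ x y : Equiv.Perm (Fin n), x ^ 2 = 1 ∧ y ^ 2 = 1 ∧ w = x * y) ∧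
      ∀ x y : Equiv.Perm (Fin n), x ^ 2 = 1 → y ^ 2 = 1 → w = x * y →
        (N : ℤ) ≤ (invNum x : ℤ) + (invNum y : ℤ) - (invNum w : ℤ) := by
  refine ⟨2 * N + 5 + 1, by omega, finRotate _, rfl, ?_, ?_⟩
  · refine ⟨Equiv.subLeft 0, Equiv.subLeft (-1), ?_, ?_, ?_⟩
    · ext i
      simp [sq, Equiv.Perm.mul_apply]
    · ext i
      simp [sq, Equiv.Perm.mul_apply]
    · ext i
      simp only [Equiv.Perm.mul_apply, finRotate_succ_apply, Equiv.subLeft_apply]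
      open Fin.CommRing in ring
  · intro x y hx hy hw
    set w : Equiv.Perm (Fin (2 * N + 5 + 1)) := finRotate (2 * N + 5 + 1) with hwdef
    have hx2 : x * x = 1 := by rw [← sq]; exact hx
    have hy2 : y * y = 1 := by rw [← sq]; exact hy
    have hyx : y = x * w := by
      rw [hw, ← mul_assoc, hx2, one_mul]
    have hcx : x * w * x = w⁻¹ := by
      apply eq_inv_of_mul_eq_one_left
      calc x * w * x * w = (x * w) * (x * w) := by group
        _ = y * y := by rw [← hyx]
        _ = 1 := hy2
    have hxy : x = w * y := by
      rw [hw, mul_assoc, hy2, mul_one]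
    have hcy : y * w * y = w⁻¹ := by
      apply eq_inv_of_mul_eq_one_right
      calc w * (y * w * y) = (w * y) * (w * y) := by group
        _ = x * x := by rw [← hxy]
        _ = 1 := hx2
    have hxform := form_of_rec x (rec_of_conj x hx2 hcx)
    have hyform := form_of_rec y (rec_of_conj y hy2 hcy)
    have Sx := invNum_ge x hxform (N + 3) (by omega)
    have Sy := invNum_ge y hyform (N + 3) (by omega)
    have hwle : invNum w ≤ 2 * N + 5 + 1 := invNum_finRotate_le (2 * N + 5)
    have gauss := Finset.sum_range_id_mul_two (N + 3)
    have hS : 3 * N + 6 ≤ (∑ j ∈ Finset.range (N + 3), j) * 2 := by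
      rw [Finset.sum_range_id_mul_two]
      have h3 : N + 3 - 1 = N + 2 := rfl
      rw [h3]; nlinarith
    set S := ∑ j ∈ Finset.range (N + 3), j with hSdef
    have : N + invNum w ≤ invNum x + invNum y := by omega
    omega
end

section
/- Let N = {(λ₁, λ₂, λ₃) ∈ ℤ³ : λ₁ + λ₂ + λ₃ = 0}, let H = Sym(3) act on N by permuting coordinates, and let G = N ⋊ H be the corresponding semidirect product (so G is isomorphic to the affine Coxeter group of type Ã₂). Let λ be a nonzero integer, let g = (1 2) ∈ H, and let w ∈ G be the element with translation part (λ, λ, −2λ) and finite part g. Then w has infinite order and w cannot be written as a product of two elements x, y ∈ G with x² = 1 = y². In particular, not every element of an infinite Coxeter group is strongly real. -/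
/-- `N = {(λ₁, λ₂, λ₃) ∈ ℤ³ : λ₁ + λ₂ + λ₃ = 0}`, the root lattice of type `A₂`. -/
def rootLattice : AddSubgroup (Fin 3 → ℤ) where
  carrier := {v | v 0 + v 1 + v 2 = 0}
  add_mem' := by
    intro a b ha hb
    simp only [Set.mem_setOf_eq, Pi.add_apply] at *
    omega
  zero_mem' := by simp
  neg_mem' := by
    intro a ha
    simp only [Set.mem_setOf_eq, Pi.neg_apply] at *
    omega

lemma sum_comp_perm (σ : Equiv.Perm (Fin 3)) (v : Fin 3 → ℤ) (hv : v 0 + v 1 + v 2 = 0) :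
    v (σ 0) + v (σ 1) + v (σ 2) = 0 := by
  have h := Equiv.sum_comp σ v
  rw [Fin.sum_univ_three, Fin.sum_univ_three] at h
  omega

/-- The (multiplicative) group structure on `AddAut A` that Mathlib provided in the original
version (`mul g h := h.trans g`); current Mathlib only gives `AddAut A` an additive group. -/
instance addAutGroupOld (A : Type*) [Add A] : Group (AddAut A) where
  mul g h := AddEquiv.trans h g
  one := AddEquiv.refl _
  inv := AddEquiv.symm
  mul_assoc _ _ _ := rfl
  one_mul _ := rfl
  mul_one _ := rfl
  inv_mul_cancel := AddEquiv.self_trans_symm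

@[simp]
theorem addAutGroupOld_one_apply (A : Type*) [Add A] (a : A) : (1 : AddAut A) a = a := rfl

@[simp]
theorem addAutGroupOld_mul_apply (A : Type*) [Add A] (e₁ e₂ : AddAut A) (a : A) :
    (e₁ * e₂) a = e₁ (e₂ a) := rfl

/-- `Sym(3)` acts on the lattice `N` by permuting the three coordinates. -/
def permAddAut : Equiv.Perm (Fin 3) →* AddAut ↥rootLattice where
  toFun σ :=
    { toFun := fun v => ⟨fun i => v.1 (σ⁻¹ i), sum_comp_perm σ⁻¹ v.1 v.2⟩
      invFun := fun v => ⟨fun i => v.1 (σ i), sum_comp_perm σ v.1 v.2⟩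
      left_inv := fun v => by ext i; simp
      right_inv := fun v => by ext i; simp
      map_add' := fun v w => by ext i; simp [AddSubgroup.coe_add] }
  map_one' := by ext v i; simp
  map_mul' := fun σ τ => by ext v i; simp [Equiv.Perm.mul_apply]

/-- The action of `Sym(3)` on `N` (written multiplicatively), used to form `N ⋊ Sym(3)`. -/
def permMulAut : Equiv.Perm (Fin 3) →* MulAut (Multiplicative ↥rootLattice) where
  toFun σ := AddEquiv.toMultiplicative (permAddAut σ)
  map_one' := by show AddEquiv.toMultiplicative (permAddAut 1) = 1; rw [map_one]; rfl
  map_mul' := fun σ τ => rfl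

/-- `G = N ⋊ Sym(3)`, isomorphic to the affine Coxeter group of type `Ã₂`. -/
abbrev AffineA2 := Multiplicative ↥rootLattice ⋊[permMulAut] Equiv.Perm (Fin 3)

/-- The element `w` of `G` with translation part `(a, a, −2a)` and finite part `(1 2)`. -/
def wElt (a : ℤ) : AffineA2 :=
  ⟨Multiplicative.ofAdd ⟨![a, a, -2 * a], by
      simp [rootLattice, Set.mem_setOf_eq]
      ring⟩,
    Equiv.swap 0 1⟩

/-- **Hart–Rowley, Introduction.** In the infinite Coxeter group `G = N ⋊ Sym(3)` of type
`Ã₂`, the element `w` with translation part `(a, a, −2a)` (`a ≠ 0`) and finite part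
`(1 2)` has infinite order and is not a product of two elements of order dividing `2`;
in particular, not every element of an infinite Coxeter group is strongly real. -/
theorem not_strongly_real_in_affineA2 (a : ℤ) (ha : a ≠ 0) :
    ¬ IsOfFinOrder (wElt a) ∧
      ¬ ∃ x y : AffineA2, x ^ 2 = 1 ∧ y ^ 2 = 1 ∧ wElt a = x * y := by
  constructor
  · -- infinite order
    intro h
    obtain ⟨n, hn, hpow⟩ := isOfFinOrder_iff_pow_eq_one.mp h
    have hsq : (wElt a) * (wElt a) =
        SemidirectProduct.inl (Multiplicative.ofAdd
          ⟨![2*a, 2*a, -4*a], by simp [rootLattice]; ring⟩) := by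
      refine SemidirectProduct.ext ?_ (Equiv.swap_mul_self 0 1)
      apply Multiplicative.toAdd.injective
      apply Subtype.ext
      funext i
      show (Multiplicative.toAdd ((wElt a).1 * permMulAut (wElt a).2 (wElt a).1)).1 i
          = (![2*a, 2*a, -4*a] : Fin 3 → ℤ) i
      fin_cases i <;>
        simp [wElt, permMulAut, permAddAut, Equiv.swap_apply_def, Matrix.vecHead, Matrix.vecTail, Function.comp] <;> ring
    have h2 : ((wElt a) * (wElt a)) ^ n = 1 := by
      rw [← pow_two, ← pow_mul, pow_mul', hpow, one_pow]
    rw [hsq, ← map_pow] at h2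
    have h3 := congrArg (fun m : AffineA2 => (Multiplicative.toAdd m.1).1 0) h2
    simp only [SemidirectProduct.left_inl, toAdd_pow, toAdd_ofAdd] at h3
    have h4 : (n : ℤ) * (2 * a) = 0 := by
      simpa [nsmul_eq_mul] using h3
    have hn' : (n : ℤ) ≠ 0 := Int.natCast_ne_zero.mpr hn.ne'
    rcases mul_eq_zero.mp h4 with h | h
    · exact hn' h
    · omega
  · rintro ⟨x, y, hx, hy, hw⟩
    have key : ∀ z : AffineA2, z ^ 2 = 1 → ∀ i : Fin 3, z.2⁻¹ i = i →
        (Multiplicative.toAdd z.1).1 i = 0 := by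
      intro z hz i hi
      rw [pow_two] at hz
      have h1 : (Multiplicative.toAdd z.1).1 i
          + (Multiplicative.toAdd z.1).1 (z.2⁻¹ i) = 0 :=
        congrArg (fun m : AffineA2 => (Multiplicative.toAdd m.1).1 i) hz
      rw [hi] at h1
      omega
    have hxr : x.2 ^ 2 = 1 := by
      have := congrArg SemidirectProduct.rightHom hx
      rwa [map_pow, map_one] at this
    have hyr : y.2 ^ 2 = 1 := by
      have := congrArg SemidirectProduct.rightHom hy
      rwa [map_pow, map_one] at this
    have hr : x.2 * y.2 = Equiv.swap 0 1 :=
      (congrArg SemidirectProduct.right hw).symm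
    have hy2 : y.2 = x.2⁻¹ * Equiv.swap 0 1 := by
      rw [← hr, inv_mul_cancel_left]
    have hcases : ∀ σ : Equiv.Perm (Fin 3), σ ^ 2 = 1 →
        (σ⁻¹ * Equiv.swap 0 1) ^ 2 = 1 → σ = 1 ∨ σ = Equiv.swap 0 1 := by decide
    have hwl : (wElt a).1 = x.1 * permMulAut x.2 y.1 :=
      congrArg SemidirectProduct.left hw
    rcases hcases x.2 hxr (hy2 ▸ hyr) with hσ | hσ
    · -- x.2 = 1, so x.1 = 1 and y carries everything
      have hx1 : x.1 = 1 := by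
        have h0 : Multiplicative.toAdd x.1 = 0 := by
          apply Subtype.ext
          funext i
          exact key x hx i (by rw [hσ]; rfl)
        exact h0
      have hyl : y.1 = (wElt a).1 := by
        rw [hwl, hx1, hσ, map_one, one_mul]
        rfl
      have hyr2 : y.2 = Equiv.swap 0 1 := by rw [hy2, hσ, inv_one, one_mul]
      have := key y hy 2 (by rw [hyr2]; decide)
      rw [hyl] at this
      have h2 : (-2 : ℤ) * a = 0 := this
      omega
    · -- x.2 = swap 0 1, so y.2 = 1, y.1 = 1
      have hyr2 : y.2 = 1 := by
        rw [hσ] at hr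
        exact mul_left_cancel (a := Equiv.swap 0 1) (by rw [hr, mul_one])
      have hy1 : y.1 = 1 := by
        have h0 : Multiplicative.toAdd y.1 = 0 := by
          apply Subtype.ext
          funext i
          exact key y hy i (by rw [hyr2]; rfl)
        exact h0
      have hxl : x.1 = (wElt a).1 := by
        rw [hwl, hy1, map_one, mul_one]
      have := key x hx 2 (by rw [hσ]; decide)
      rw [hxl] at this
      have h2 : (-2 : ℤ) * a = 0 := this
      omega
end

section
/- Let (W,S) be a Coxeter system with length function ℓ, let J ⊆ S, and let W_J be the standard parabolic subgroup generated by J. Suppose z ∈ W is an involution of minimal length in its W_J-conjugacy class, i.e. ℓ(g z g⁻¹) ≥ ℓ(z) for all g ∈ W_J. If r ∈ J satisfies ℓ(zr) < ℓ(z), then r z r = z (so z commutes with r). -/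
open List
open scoped Classical

namespace HRAux

variable {B W : Type*} [Group W] {M : CoxeterMatrix B} (cs : CoxeterSystem M W)

local prefix:100 "s" => cs.simple
local prefix:100 "π" => cs.wordProd
local prefix:100 "ℓ" => cs.length

/-- The basic involution on `W × ZMod 2` attached to a simple reflection. -/
noncomputable def permFn (i : B) : W × ZMod 2 → W × ZMod 2 :=
  fun x => (s i * x.1 * s i, x.2 + if x.1 = s i then 1 else 0)

lemma permFn_involutive (i : B) : Function.Involutive (permFn cs i) := by
  rintro ⟨t, e⟩
  simp only [permFn]
  have h1 : s i * (s i * t * s i) * s i = t := by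
    simp only [← mul_assoc, cs.simple_mul_simple_cancel_left]
    exact cs.simple_mul_simple_cancel_right i
  have h2 : (s i * t * s i = s i) ↔ (t = s i) := by
    constructor
    · intro h
      have := congrArg (fun w => s i * (w * s i)) h
      simpa only [← mul_assoc, cs.simple_mul_simple_cancel_left,
        cs.simple_mul_simple_cancel_right, cs.simple_mul_simple_self, mul_one] using this
    · rintro rfl; rw [cs.simple_mul_simple_self, one_mul]
  rw [h1]
  ext
  · rfl
  · simp only [h2, add_assoc]
    rcases eq_or_ne t (s i) with h | h <;> simp [h] <;> decide

/-- The permutation of `W × ZMod 2` attached to a simple reflection. -/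
noncomputable def permAut (i : B) : Equiv.Perm (W × ZMod 2) :=
  (permFn_involutive cs i).toPerm

lemma permAut_apply (i : B) (x : W × ZMod 2) :
    permAut cs i x = (s i * x.1 * s i, x.2 + if x.1 = s i then 1 else 0) := rfl

/-- Key computation: products of `permAut`s along a word act by conjugation on the first
coordinate and add the count of the right inversion sequence on the second. -/
lemma prod_permAut (ω : List B) (x : W × ZMod 2) :
    ((ω.map (permAut cs)).prod) x
      = (π ω * x.1 * (π ω)⁻¹, x.2 + ((cs.rightInvSeq ω).count x.1 : ZMod 2)) := by
  induction ω generalizing x with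
  | nil => simp [CoxeterSystem.rightInvSeq]
  | cons i ω ih =>
      rcases x with ⟨t, e⟩
      rw [List.map_cons, List.prod_cons, Equiv.Perm.mul_apply, ih]
      rw [permAut_apply]
      have hiff : ((π ω)⁻¹ * s i * π ω = t) ↔ (π ω * t * (π ω)⁻¹ = s i) := by
        constructor <;> intro h <;> rw [← h] <;> group
      simp only [CoxeterSystem.rightInvSeq, CoxeterSystem.wordProd_cons, List.count_cons]
      ext
      · simp [mul_assoc]
      · simp only [beq_iff_eq, hiff, Nat.cast_add, Nat.cast_ite, Nat.cast_one, Nat.cast_zero]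
        push_cast
        ring_nf

lemma inv_qpow (i i' : B) : (s i * s i')⁻¹ = s i' * s i := by
  rw [mul_inv_rev, cs.inv_simple, cs.inv_simple]

lemma key_si (i i' : B) : s i' * (s i * s i') = (s i * s i')⁻¹ * s i' := by
  rw [inv_qpow, mul_assoc]

lemma comm_pow (i i' : B) (n : ℕ) :
    s i' * (s i * s i') ^ n = ((s i * s i')⁻¹) ^ n * s i' := by
  induction n with
  | zero => simp
  | succ n ih =>
      calc s i' * (s i * s i') ^ (n + 1)
          = s i' * (s i * s i') ^ n * (s i * s i') := by rw [pow_succ, ← mul_assoc]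
        _ = ((s i * s i')⁻¹) ^ n * s i' * (s i * s i') := by rw [ih]
        _ = ((s i * s i')⁻¹) ^ n * (s i' * (s i * s i')) := by
            rw [mul_assoc]
        _ = ((s i * s i')⁻¹) ^ n * ((s i * s i')⁻¹ * s i') := by rw [key_si]
        _ = ((s i * s i')⁻¹) ^ (n + 1) * s i' := by rw [← mul_assoc, ← pow_succ]

/-- The conjugation formula for entries of inversion sequences of alternating words. -/
lemma alt_conj (i i' : B) (k : ℕ) :
    (π (CoxeterSystem.alternatingWord i i' k))⁻¹ * (s (if Even k then i' else i))
      * π (CoxeterSystem.alternatingWord i i' k)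
      = s i' * (s i * s i') ^ k := by
  rw [cs.prod_alternatingWord_eq_mul_pow]
  rcases Nat.even_or_odd k with hk | hk
  · obtain ⟨a, rfl⟩ : ∃ a, k = 2 * a := ⟨k / 2, (Nat.two_mul_div_two_of_even hk).symm⟩
    rw [if_pos hk, if_pos hk, one_mul, Nat.mul_div_cancel_left _ (by norm_num)]
    calc ((s i * s i') ^ a)⁻¹ * s i' * (s i * s i') ^ a
        = ((s i * s i')⁻¹) ^ a * s i' * (s i * s i') ^ a := by rw [← inv_pow]
      _ = ((s i * s i')⁻¹) ^ a * (s i' * (s i * s i') ^ a) := by rw [mul_assoc]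
      _ = ((s i * s i')⁻¹) ^ a * (((s i * s i')⁻¹) ^ a * s i') := by rw [comm_pow]
      _ = ((s i * s i')⁻¹) ^ a * ((s i * s i')⁻¹) ^ a * s i' := by rw [← mul_assoc]
      _ = ((s i * s i')⁻¹) ^ (a + a) * s i' := by rw [← pow_add]
      _ = s i' * (s i * s i') ^ (a + a) := (comm_pow cs i i' (a + a)).symm
      _ = s i' * (s i * s i') ^ (2 * a) := by rw [two_mul]
  · obtain ⟨a, rfl⟩ : ∃ a, k = 2 * a + 1 := by
      obtain ⟨a, ha⟩ := hk; exact ⟨a, ha⟩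
    have hne : ¬ Even (2 * a + 1) := by simp [Nat.even_iff]
    rw [if_neg hne, if_neg hne]
    have hdiv : (2 * a + 1) / 2 = a := by omega
    rw [hdiv]
    calc (s i' * (s i * s i') ^ a)⁻¹ * s i * (s i' * (s i * s i') ^ a)
        = ((s i * s i') ^ a)⁻¹ * (s i')⁻¹ * s i * (s i' * (s i * s i') ^ a) := by
          rw [mul_inv_rev]
      _ = ((s i * s i')⁻¹) ^ a * s i' * s i * (s i' * (s i * s i') ^ a) := by
          rw [← inv_pow, cs.inv_simple]
      _ = ((s i * s i')⁻¹) ^ a * (s i' * s i) * (s i' * (s i * s i') ^ a) := by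
          rw [mul_assoc (((s i * s i')⁻¹) ^ a)]
      _ = ((s i * s i')⁻¹) ^ a * (s i * s i')⁻¹ * (s i' * (s i * s i') ^ a) := by
          rw [inv_qpow]
      _ = ((s i * s i')⁻¹) ^ (a + 1) * (s i' * (s i * s i') ^ a) := by rw [← pow_succ]
      _ = ((s i * s i')⁻¹) ^ (a + 1) * (((s i * s i')⁻¹) ^ a * s i') := by rw [comm_pow]
      _ = ((s i * s i')⁻¹) ^ (a + 1) * ((s i * s i')⁻¹) ^ a * s i' := by rw [← mul_assoc]
      _ = ((s i * s i')⁻¹) ^ (a + 1 + a) * s i' := by rw [← pow_add]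
      _ = s i' * (s i * s i') ^ (a + 1 + a) := (comm_pow cs i i' _).symm
      _ = s i' * (s i * s i') ^ (2 * a + 1) := by rw [show a + 1 + a = 2 * a + 1 by omega]

/-- Explicit form of the right inversion sequence of an alternating word. -/
lemma ris_alt (i i' : B) (n : ℕ) :
    cs.rightInvSeq (CoxeterSystem.alternatingWord i i' n)
      = (List.range n).reverse.map (fun k => s i' * (s i * s i') ^ k) := by
  induction n with
  | zero => simp [CoxeterSystem.alternatingWord, CoxeterSystem.rightInvSeq]
  | succ n ih =>
      rw [CoxeterSystem.alternatingWord_succ']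
      show ((π (CoxeterSystem.alternatingWord i i' n))⁻¹ * _ * _) :: _ = _
      rw [ih, List.range_succ, List.reverse_append, alt_conj]
      simp

lemma alt_two_mul_succ (i i' : B) (m : ℕ) :
    CoxeterSystem.alternatingWord i i' (2 * (m + 1))
      = i :: i' :: CoxeterSystem.alternatingWord i i' (2 * m) := by
  rw [show 2 * (m + 1) = (2 * m + 1) + 1 by ring, CoxeterSystem.alternatingWord_succ',
    CoxeterSystem.alternatingWord_succ']
  have h1 : ¬ Even (2 * m + 1) := by simp [Nat.even_iff]
  have h2 : Even (2 * m) := ⟨m, two_mul m⟩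
  rw [if_neg h1, if_pos h2]

lemma map_alt_prod {G : Type*} [Monoid G] (f : B → G) (i i' : B) (m : ℕ) :
    ((CoxeterSystem.alternatingWord i i' (2 * m)).map f).prod = (f i * f i') ^ m := by
  induction m with
  | zero => simp [CoxeterSystem.alternatingWord]
  | succ m ih =>
      rw [alt_two_mul_succ, List.map_cons, List.map_cons, List.prod_cons, List.prod_cons, ih,
        pow_succ', ← mul_assoc]

lemma count_ris_alt (i i' : B) (t : W) :
    ∃ c, (cs.rightInvSeq (CoxeterSystem.alternatingWord i i' (2 * M i i'))).count t
      = 2 * c := by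
  rw [ris_alt]
  set f : ℕ → W := fun k => s i' * (s i * s i') ^ k with hf
  have hqm : (s i * s i') ^ M i i' = 1 := cs.simple_mul_simple_pow i i'
  have hper : (f ∘ (fun k => M i i' + k)) = f := by
    funext k
    simp only [hf, Function.comp_apply, pow_add, hqm, one_mul]
  refine ⟨((List.range (M i i')).reverse.map f).count t, ?_⟩
  rw [two_mul, List.range_add, List.reverse_append, List.map_append, List.count_append,
    List.map_reverse, List.map_map, hper, ← List.map_reverse]
  ring

lemma liftable : M.IsLiftable (permAut cs) := by
    intro i i'
    apply Equiv.ext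
    intro x
    rw [← map_alt_prod (permAut cs) i i' (M i i'), prod_permAut]
    have hπ : π (CoxeterSystem.alternatingWord i i' (2 * M i i')) = 1 := by
      rw [cs.prod_alternatingWord_eq_mul_pow, if_pos ⟨M i i', two_mul _⟩, one_mul,
        Nat.mul_div_cancel_left _ (by norm_num), cs.simple_mul_simple_pow]
    obtain ⟨c, hc⟩ := count_ris_alt cs i i' x.1
    rw [hπ, hc]
    have : ((2 * c : ℕ) : ZMod 2) = 0 := by
      push_cast
      rw [show ((2:ZMod 2)) = 0 by decide, zero_mul]
    rw [this, add_zero]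
    simp

noncomputable def phi : W →* Equiv.Perm (W × ZMod 2) :=
  cs.lift ⟨permAut cs, liftable cs⟩

lemma phi_simple (i : B) : phi cs (s i) = permAut cs i := by
  simp [phi]

lemma phi_wordProd (ω : List B) : phi cs (π ω) = ((ω.map (permAut cs)).prod) := by
  induction ω with
  | nil => simp
  | cons i ω ih => rw [CoxeterSystem.wordProd_cons, map_mul, ih, phi_simple, List.map_cons,
      List.prod_cons]

/-- The parity invariant: `parity cs w t = 1` iff `t` is a "right inversion" of `w`. -/
noncomputable def parity (w t : W) : ZMod 2 := (phi cs w (t, 0)).2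

lemma parity_wordProd (ω : List B) (t : W) :
    parity cs (π ω) t = ((cs.rightInvSeq ω).count t : ZMod 2) := by
  rw [parity, phi_wordProd, prod_permAut, zero_add]

lemma phi_apply (w : W) (x : W × ZMod 2) :
    phi cs w x = (w * x.1 * w⁻¹, x.2 + parity cs w x.1) := by
  obtain ⟨ω, _, rfl⟩ := cs.exists_reduced_word w
  rw [phi_wordProd, prod_permAut, parity_wordProd]

lemma parity_mul (x y t : W) :
    parity cs (x * y) t = parity cs y t + parity cs x (y * t * y⁻¹) := by
  have h2 : phi cs (x * y) ((t, 0) : W × ZMod 2) = phi cs x (phi cs y (t, 0)) := by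
    rw [map_mul]; rfl
  rw [phi_apply cs y, phi_apply cs x, phi_apply cs (x * y)] at h2
  have := congrArg Prod.snd h2
  simpa [add_comm, add_assoc, add_left_comm] using this

lemma parity_one (t : W) : parity cs 1 t = 0 := by
  rw [parity, map_one]
  rfl

lemma parity_simple_self (i : B) : parity cs (s i) (s i) = 1 := by
  have : s i = π [i] := by simp
  rw [this, parity_wordProd]
  simp

lemma parity_simple_ne (i : B) (t : W) (h : t ≠ s i) : parity cs (s i) t = 0 := by
  have : s i = π [i] := by simp
  rw [this, parity_wordProd]
  have : (cs.rightInvSeq [i]).count t = 0 := by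
    rw [List.count_eq_zero, cs.rightInvSeq_singleton]
    simp [h]
  rw [this, Nat.cast_zero]

/-- If the parity invariant of `(w, t)` is `1`, then right multiplication by `t`
decreases the length of `w`. -/
lemma length_lt_of_parity (n : ℕ) : ∀ w t : W, ℓ w = n → parity cs w t = 1
    → ℓ (w * t) < ℓ w := by
  induction n using Nat.strong_induction_on with
  | _ n ih =>
    intro w t hn hp
    rcases eq_or_ne w 1 with rfl | hw
    · rw [parity_one] at hp
      exact absurd hp (by decide)
    · obtain ⟨j, hj⟩ := cs.exists_rightDescent_of_ne_one hw
      have hww : w = (w * s j) * s j := (cs.simple_mul_simple_cancel_right j).symm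
      rcases eq_or_ne t (s j) with rfl | htj
      · exact hj
      · have hsplit : parity cs w t
            = parity cs (s j) t + parity cs (w * s j) (s j * t * (s j)⁻¹) := by
          nth_rewrite 1 [hww]
          exact parity_mul cs (w * s j) (s j) t
        rw [parity_simple_ne cs j t htj, zero_add, hp] at hsplit
        have hlen' : ℓ (w * s j) < n := hn ▸ hj
        have hIH := ih (ℓ (w * s j)) hlen' (w * s j) (s j * t * (s j)⁻¹) rfl hsplit.symm
        have h1 : ((w * s j) * (s j * t * (s j)⁻¹)) * s j = w * t := by
          rw [cs.inv_simple]
          simp only [mul_assoc, cs.simple_mul_simple_cancel_left, cs.simple_mul_simple_self,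
            mul_one]
        calc ℓ (w * t) = ℓ (((w * s j) * (s j * t * (s j)⁻¹)) * s j) := by rw [h1]
          _ ≤ ℓ ((w * s j) * (s j * t * (s j)⁻¹)) + ℓ (s j) := cs.length_mul_le _ _
          _ = ℓ ((w * s j) * (s j * t * (s j)⁻¹)) + 1 := by rw [cs.length_simple]
          _ ≤ ℓ (w * s j) := hIH
          _ < ℓ w := hj

lemma parity_refl_self {t : W} (ht : cs.IsReflection t) : parity cs t t = 1 := by
  obtain ⟨v, j, rfl⟩ := ht
  have hA := parity_mul cs v⁻¹ v (s j)
  rw [show v⁻¹ * v = 1 by group, parity_one] at hA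
  have hB := parity_mul cs (v * s j) v⁻¹ (v * s j * v⁻¹)
  rw [show v⁻¹ * (v * s j * v⁻¹) * v⁻¹⁻¹ = s j by group] at hB
  have hC := parity_mul cs v (s j) (s j)
  rw [parity_simple_self, cs.inv_simple, cs.simple_mul_simple_cancel_right] at hC
  rw [hB, hC]
  revert hA
  generalize parity cs v (s j) = a
  generalize parity cs v⁻¹ (v * s j * v⁻¹) = b
  revert a b
  decide

/-- Converse: a right inversion has parity `1`. -/
lemma parity_eq_one_of_lt {w t : W} (ht : cs.IsReflection t) (h : ℓ (w * t) < ℓ w) :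
    parity cs w t = 1 := by
  rcases (show ∀ a : ZMod 2, a = 0 ∨ a = 1 by decide) (parity cs w t) with h0 | h1
  · exfalso
    have hw : w = (w * t) * t := by
      rw [mul_assoc, ht.mul_self, mul_one]
    have hsplit : parity cs w t = parity cs t t + parity cs (w * t) (t * t * t⁻¹) := by
      nth_rewrite 1 [hw]
      exact parity_mul cs (w * t) t t
    rw [ht.mul_self, one_mul, ht.inv, parity_refl_self cs ht, h0] at hsplit
    have hut : parity cs (w * t) t = 1 := by
      revert hsplit
      generalize parity cs (w * t) t = a
      revert a
      decide
    have := length_lt_of_parity cs (ℓ (w * t)) (w * t) t rfl hut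
    rw [mul_assoc, ht.mul_self, mul_one] at this
    omega
  · exact h1

/-- Exchange-flavoured statement: if right multiplication by `s i` shortens `π ω`,
then `s i` occurs in the right inversion sequence of `ω`. -/
lemma mem_ris_of_descent {ω : List B} {i : B} (h : ℓ (π ω * s i) < ℓ (π ω)) :
    s i ∈ cs.rightInvSeq ω := by
  have hp := parity_eq_one_of_lt cs (cs.isReflection_simple i) h
  rw [parity_wordProd] at hp
  by_contra hmem
  rw [List.count_eq_zero_of_not_mem hmem] at hp
  simp at hp

end HRAux

/-- **Hart–Rowley, proof of Theorem 1.1.** Let `(W, S)` be a Coxeter system, `J ⊆ S`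
(given by a subset `J` of the index set, with `W_J` the standard parabolic subgroup
generated by the corresponding simple reflections). If `z` is an involution of minimal
length in its `W_J`-conjugacy class, and `r ∈ J` satisfies `ℓ(z r) < ℓ(z)`, then
`r z r = z`. -/
theorem simple_commutes_of_minimal_involution {B W : Type*} [Group W]
    {M : CoxeterMatrix B} (cs : CoxeterSystem M W) (J : Set B) (z : W)
    (hz : z ^ 2 = 1) (hz1 : z ≠ 1)
    (hmin : ∀ g ∈ Subgroup.closure (cs.simple '' J),
      cs.length z ≤ cs.length (g * z * g⁻¹))
    (i : B) (hi : i ∈ J)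
    (hlt : cs.length (z * cs.simple i) < cs.length z) :
    cs.simple i * z * cs.simple i = z := by
  have hzz : z * z = 1 := by rw [← pow_two]; exact hz
  have hzinv : z⁻¹ = z := inv_eq_of_mul_eq_one_right hzz
  have hmin' : cs.length z ≤ cs.length (cs.simple i * z * cs.simple i) := by
    have := hmin (cs.simple i)
      (Subgroup.subset_closure (Set.mem_image_of_mem cs.simple hi))
    rwa [cs.inv_simple] at this
  have h1 : cs.length (cs.simple i * z) = cs.length (z * cs.simple i) := by
    rw [← cs.length_inv (cs.simple i * z), mul_inv_rev, hzinv, cs.inv_simple]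
  obtain ⟨ωu, hlen_u, hprod_u⟩ := cs.exists_reduced_word (cs.simple i * z)
  have hπz : cs.wordProd (i :: ωu) = z := by
    rw [cs.wordProd_cons, ← hprod_u, cs.simple_mul_simple_cancel_left]
  have hmem : cs.simple i ∈ cs.rightInvSeq (i :: ωu) := by
    apply HRAux.mem_ris_of_descent
    rw [hπz]
    exact hlt
  obtain ⟨j, hj, hgetelem⟩ := List.mem_iff_getElem.mp hmem
  have hgd : (cs.rightInvSeq (i :: ωu)).getD j 1 = cs.simple i := by
    rw [List.getD_eq_getElem _ _ hj, hgetelem]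
  have hexch : z * cs.simple i = cs.wordProd ((i :: ωu).eraseIdx j) := by
    rw [← hπz, ← hgd]
    exact cs.wordProd_mul_getD_rightInvSeq (i :: ωu) j
  rcases j with _ | k
  · -- the erased letter is the leading `i`: then `z` and `s i` commute.
    rw [List.eraseIdx_cons_zero, ← hprod_u] at hexch
    calc cs.simple i * z * cs.simple i = cs.simple i * (z * cs.simple i) := by
          rw [mul_assoc]
      _ = cs.simple i * (cs.simple i * z) := by rw [hexch]
      _ = z := cs.simple_mul_simple_cancel_left i
  · -- the erased letter is inside `ωu`: contradiction with minimality.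
    exfalso
    rw [List.eraseIdx_cons_succ, cs.wordProd_cons] at hexch
    have hszs : cs.simple i * z * cs.simple i = cs.wordProd (ωu.eraseIdx k) := by
      rw [mul_assoc, hexch, cs.simple_mul_simple_cancel_left]
    have hk : k < ωu.length := by
      have := hj
      rw [cs.length_rightInvSeq] at this
      simpa using this
    have hlen_bound : cs.length (cs.simple i * z * cs.simple i)
        ≤ (ωu.eraseIdx k).length := by
      rw [hszs]; exact cs.length_wordProd_le _
    have herase : (ωu.eraseIdx k).length + 1 = ωu.length :=
      List.length_eraseIdx_add_one hk
    have hdich := cs.length_mul_simple z i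
    have hlu := hlen_u.eq
    rw [← hprod_u] at hlu
    omega
end
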